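/- arXiv:2402.12523 — 4 statements merged into one kernel-verified Lean document; each statement's English description precedes it below -/
import Mathlib

section
/- Let p ≥ 1 and α > -1. Then ‖δ_s‖_{(A^p_{α,∞})^*} = O(2^{-Re s}) as Re s → +∞; that is, there exist C > 0 and σ₀ > 1/2 such that ‖δ_s‖_{(A^p_{α,∞})^*} ≤ C · 2^{-Re s} for every s ∈ ℂ with Re s ≥ σ₀. -/
open MeasureTheory Complex Set

noncomputable section

/-- The infinite polytorus `T^∞`, realized as a countable product of (additive) circles. -/
abbrev PolyTorus : Type := ℕ → UnitAddCircle

/-- The normalized Haar probability measure `m_∞` on the infinite polytorus. -/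
noncomputable def haarPolyTorus : Measure PolyTorus := Measure.addHaarMeasure ⊤

/-- The Bohr lift of the Dirichlet monomial `n^{-s}`: the function
`z ↦ ∏_j z_j^{ν_j(n)}` where `ν_j(n)` is the exponent of the `j`-th prime in `n`. -/
noncomputable def bohrMonomial (z : PolyTorus) (n : ℕ) : ℂ :=
  n.factorization.prod fun q k => (((z (Nat.count Nat.Prime q)).toCircle : ℂ)) ^ k

/-- The `H^p`-norm of the Dirichlet polynomial `s ↦ ∑_{n=1}^N a n · n^{-s}`. -/
noncomputable def HpNorm (p : ℝ) (N : ℕ) (a : ℕ → ℂ) : ℝ :=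
  (∫ z : PolyTorus, ‖∑ n ∈ Finset.Icc 1 N, a n * bohrMonomial z n‖ ^ p ∂haarPolyTorus) ^ (1 / p)

/-- The coefficients of the translated Dirichlet polynomial `P_σ(s) = P(σ + s)`. -/
noncomputable def transl (σ : ℝ) (a : ℕ → ℂ) : ℕ → ℂ :=
  fun n => a n * (((n : ℝ) ^ (-σ) : ℝ) : ℂ)

/-- The density `h_α(σ) = (2^{α+1}/Γ(α+1)) σ^α e^{-2σ}`. -/
noncomputable def hWeight (α : ℝ) (σ : ℝ) : ℝ :=
  (2 ^ (α + 1) / Real.Gamma (α + 1)) * σ ^ α * Real.exp (-2 * σ)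

/-- The `A^p_α`-norm of the Dirichlet polynomial with coefficients `a` (up to degree `N`). -/
noncomputable def ApNorm (p α : ℝ) (N : ℕ) (a : ℕ → ℂ) : ℝ :=
  (∫ σ in Set.Ioi (0 : ℝ), HpNorm p N (transl σ a) ^ p * hWeight α σ) ^ (1 / p)

/-- Evaluation of the Dirichlet polynomial `∑_{n=1}^N a n · n^{-s}` at `s`. -/
noncomputable def dirEval (N : ℕ) (a : ℕ → ℂ) (s : ℂ) : ℂ :=
  ∑ n ∈ Finset.Icc 1 N, a n * (n : ℂ) ^ (-s)

/-- The norm of the evaluation functional `δ_s` on `A^p_α`. -/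
noncomputable def deltaNorm (p α : ℝ) (s : ℂ) : ℝ :=
  sSup {x : ℝ | ∃ (N : ℕ) (a : ℕ → ℂ), ApNorm p α N a ≤ 1 ∧ x = ‖dirEval N a s‖}

/-- The norm of the evaluation functional `δ_s` on `A^p_{α,∞}` (zero constant term). -/
noncomputable def deltaNormZero (p α : ℝ) (s : ℂ) : ℝ :=
  sSup {x : ℝ | ∃ (N : ℕ) (a : ℕ → ℂ), a 1 = 0 ∧ ApNorm p α N a ≤ 1 ∧ x = ‖dirEval N a s‖}

/-- Coefficients of `I_t P`: `a n (log n)^{-t}`. -/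
noncomputable def Icoef (t : ℝ) (a : ℕ → ℂ) : ℕ → ℂ :=
  fun n => a n * ((Real.log n ^ (-t) : ℝ) : ℂ)

lemma norm_bohr (z : PolyTorus) (n : ℕ) : ‖bohrMonomial z n‖ = 1 := by
  rw [bohrMonomial, Finsupp.prod, norm_prod]
  exact Finset.prod_eq_one fun q _ => by rw [norm_pow]; exact (congrArg (· ^ _) (Circle.norm_coe _)).trans (one_pow _)

lemma continuous_circle_coord (j : ℕ) :
    Continuous fun z : PolyTorus => ((z j).toCircle : ℂ) := by
  have h1 : Continuous fun z : PolyTorus => z j := continuous_apply j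
  exact continuous_induced_dom.comp (AddCircle.continuous_toCircle.comp h1)

lemma continuous_bohr (n : ℕ) : Continuous fun z : PolyTorus => bohrMonomial z n := by
  unfold bohrMonomial Finsupp.prod
  exact continuous_finset_prod _ fun q _ => (continuous_circle_coord _).pow _

lemma bohr_shift (n q : ℕ) (hq : q.Prime) (t : UnitAddCircle) (z : PolyTorus) :
    bohrMonomial ((fun i => if i = Nat.count Nat.Prime q then t else 0) + z) n
      = ((t.toCircle : ℂ)) ^ (n.factorization q) * bohrMonomial z n := by
  unfold bohrMonomial Finsupp.prod
  have key : ∀ q' ∈ n.factorization.support,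
      (((((fun i => if i = Nat.count Nat.Prime q then t else 0) + z) (Nat.count Nat.Prime q')).toCircle : ℂ)) ^ (n.factorization q')
      = (if q' = q then ((t.toCircle : ℂ)) ^ (n.factorization q') else 1) *
        (((z (Nat.count Nat.Prime q')).toCircle : ℂ)) ^ (n.factorization q') := by
    intro q' hq'
    have hq'p : q'.Prime := Nat.prime_of_mem_primeFactors (by rwa [← Nat.support_factorization])
    by_cases h : q' = q
    · subst h
      simp only [Pi.add_apply, if_true, eq_self_iff_true, AddCircle.toCircle_add, Circle.coe_mul, mul_pow]
    · have hj : Nat.count Nat.Prime q' ≠ Nat.count Nat.Prime q :=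
        fun hc => h (Nat.count_injective hq'p hq hc)
      simp [Pi.add_apply, hj, h]
  rw [Finset.prod_congr rfl key, Finset.prod_mul_distrib]
  congr 1
  rw [Finset.prod_ite_eq' n.factorization.support q
    (fun q' => ((t.toCircle : ℂ)) ^ (n.factorization q'))]
  by_cases hmem : q ∈ n.factorization.support
  · simp only [if_pos hmem]
  · simp [hmem, Finsupp.notMem_support_iff.mp hmem]

instance : IsProbabilityMeasure haarPolyTorus := by
  constructor
  rw [haarPolyTorus, show (univ : Set PolyTorus) = ((⊤ : TopologicalSpace.PositiveCompacts PolyTorus) : Set PolyTorus) by simp]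
  exact Measure.addHaarMeasure_self

instance : Measure.IsAddHaarMeasure haarPolyTorus := by unfold haarPolyTorus; infer_instance

lemma bohr_orth {m n : ℕ} (hm : m ≠ 0) (hn : n ≠ 0) (hmn : m ≠ n) :
    ∫ z, bohrMonomial z m * (starRingEnd ℂ) (bohrMonomial z n) ∂haarPolyTorus = 0 := by
  obtain ⟨q, hq⟩ : ∃ q, m.factorization q ≠ n.factorization q := by
    by_contra h; push_neg at h
    exact hmn (Nat.factorization_inj (by simpa using hm) (by simpa using hn) (Finsupp.ext h))
  have hqp : q.Prime := by
    by_contra hq'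
    simp [Nat.factorization_eq_zero_of_not_prime m hq',
      Nat.factorization_eq_zero_of_not_prime n hq'] at hq
  set a : ℕ := m.factorization q with ha
  set b : ℕ := n.factorization q with hb
  have hdC : (a : ℂ) - (b : ℂ) ≠ 0 := by
    intro h
    exact hq (by exact_mod_cast sub_eq_zero.mp h)
  have hdR : (a : ℝ) - (b : ℝ) ≠ 0 := by
    intro h; apply hdC; exact_mod_cast congrArg (fun x : ℝ => (x : ℂ)) h
  set θ : ℝ := Real.pi / ((a : ℝ) - (b : ℝ)) with hθ
  set t : UnitAddCircle := ((1 / (2 * ((a:ℝ) - (b:ℝ))) : ℝ) : UnitAddCircle) with ht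
  set c : PolyTorus := fun i => if i = Nat.count Nat.Prime q then t else 0 with hc
  set g : PolyTorus → ℂ := fun z => bohrMonomial z m * (starRingEnd ℂ) (bohrMonomial z n) with hg
  set u : ℂ := (t.toCircle : ℂ) with hu'
  have hu : u = Complex.exp ((θ : ℂ) * Complex.I) := by
    rw [hu', ht, AddCircle.toCircle_apply_mk, Circle.coe_exp]
    congr 1
    push_cast [hθ]
    field_simp
  have hconj : (starRingEnd ℂ) u = Complex.exp (-(θ:ℂ) * Complex.I) := by
    rw [hu, ← Complex.exp_conj]
    congr 1
    simp [Complex.conj_I, mul_comm]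
  have hlam : u ^ a * (starRingEnd ℂ) u ^ b = -1 := by
    rw [hconj, hu, ← Complex.exp_nat_mul, ← Complex.exp_nat_mul, ← Complex.exp_add]
    rw [show (a:ℂ) * ((θ:ℂ) * Complex.I) + (b:ℂ) * (-(θ:ℂ) * Complex.I)
        = ((Real.pi : ℂ)) * Complex.I by
      push_cast [hθ]
      field_simp
      ring]
    exact Complex.exp_pi_mul_I
  have hshift : ∀ z, g (c + z) = (u ^ a * (starRingEnd ℂ) u ^ b) * g z := by
    intro z
    simp only [hg, hc, bohr_shift m q hqp t z, bohr_shift n q hqp t z, map_mul, map_pow, ← ha, ← hb, ← hu']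
    ring
  have hinv : ∫ z, g (c + z) ∂haarPolyTorus = ∫ z, g z ∂haarPolyTorus :=
    integral_add_left_eq_self g c
  simp_rw [hshift, hlam, integral_const_mul] at hinv
  show ∫ z, g z ∂haarPolyTorus = 0
  linear_combination (-1/2 : ℂ) * hinv

lemma integrable_cont {E : Type*} [NormedAddCommGroup E] {f : PolyTorus → E} (hf : Continuous f) :
    Integrable f haarPolyTorus :=
  hf.integrable_of_hasCompactSupport (HasCompactSupport.of_compactSpace f)

lemma bohr_diag (n : ℕ) :
    ∫ z, bohrMonomial z n * (starRingEnd ℂ) (bohrMonomial z n) ∂haarPolyTorus = 1 := by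
  have h : ∀ z : PolyTorus, bohrMonomial z n * (starRingEnd ℂ) (bohrMonomial z n) = 1 := by
    intro z
    rw [Complex.mul_conj]
    norm_cast
    rw [Complex.normSq_eq_norm_sq, show ‖bohrMonomial z n‖ = 1 from norm_bohr z n]
    norm_num
  simp_rw [h]
  simp

lemma coeff_norm_le (N : ℕ) (c : ℕ → ℂ) {n : ℕ} (hn : n ∈ Finset.Icc 1 N) :
    ‖c n‖ ≤ ∫ z, ‖∑ m ∈ Finset.Icc 1 N, c m * bohrMonomial z m‖ ∂haarPolyTorus := by
  have hn1 : n ≠ 0 := by have := (Finset.mem_Icc.mp hn).1; omega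
  have hkey : ∫ z, (∑ m ∈ Finset.Icc 1 N, c m * bohrMonomial z m) *
      (starRingEnd ℂ) (bohrMonomial z n) ∂haarPolyTorus = c n := by
    have hrw : ∀ z : PolyTorus, (∑ m ∈ Finset.Icc 1 N, c m * bohrMonomial z m) *
        (starRingEnd ℂ) (bohrMonomial z n)
        = ∑ m ∈ Finset.Icc 1 N, c m * (bohrMonomial z m * (starRingEnd ℂ) (bohrMonomial z n)) := by
      intro z; rw [Finset.sum_mul]; exact Finset.sum_congr rfl fun m _ => by ring
    simp_rw [hrw]
    rw [integral_finset_sum]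
    · have heach : ∀ m ∈ Finset.Icc 1 N,
          ∫ z, c m * (bohrMonomial z m * (starRingEnd ℂ) (bohrMonomial z n)) ∂haarPolyTorus
          = if m = n then c m else 0 := by
        intro m hm
        rw [integral_const_mul]
        by_cases h : m = n
        · subst h; rw [bohr_diag, mul_one, if_pos rfl]
        · rw [bohr_orth (by have := (Finset.mem_Icc.mp hm).1; omega) hn1 h, mul_zero, if_neg h]
      rw [Finset.sum_congr rfl heach, Finset.sum_ite_eq' (Finset.Icc 1 N) n c, if_pos hn]
    · intro m _
      apply integrable_cont
      have hconj : Continuous fun z : PolyTorus => (starRingEnd ℂ) (bohrMonomial z n) := by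
        simp_rw [starRingEnd_apply]
        exact (continuous_bohr n).star
      exact continuous_const.mul ((continuous_bohr m).mul hconj)
  calc ‖c n‖ = ‖∫ z, (∑ m ∈ Finset.Icc 1 N, c m * bohrMonomial z m) *
      (starRingEnd ℂ) (bohrMonomial z n) ∂haarPolyTorus‖ := by rw [hkey]
    _ ≤ ∫ z, ‖(∑ m ∈ Finset.Icc 1 N, c m * bohrMonomial z m) *
        (starRingEnd ℂ) (bohrMonomial z n)‖ ∂haarPolyTorus := norm_integral_le_integral_norm _
    _ = _ := by
        congr 1; funext z
        rw [norm_mul, RCLike.norm_conj, norm_bohr, mul_one]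

lemma integral_norm_le_rpow (p : ℝ) (hp : 1 ≤ p) {f : PolyTorus → ℂ} (hf : Continuous f) :
    ∫ z, ‖f z‖ ∂haarPolyTorus ≤ (∫ z, ‖f z‖ ^ p ∂haarPolyTorus) ^ (1/p) := by
  have hp0 : (0:ℝ) < p := lt_of_lt_of_le one_pos hp
  have hjen : (∫ z, ‖f z‖ ∂haarPolyTorus) ^ p ≤ ∫ z, ‖f z‖ ^ p ∂haarPolyTorus := by
    have := (convexOn_rpow hp).map_integral_le (μ := haarPolyTorus) (f := fun z => ‖f z‖)
      ((Real.continuous_rpow_const hp0.le).continuousOn) isClosed_Ici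
      (Filter.Eventually.of_forall fun z => norm_nonneg _)
      (integrable_cont hf.norm)
      (integrable_cont (hf.norm.rpow_const fun z => Or.inr hp0.le))
    exact this
  have hnn : 0 ≤ ∫ z, ‖f z‖ ∂haarPolyTorus := integral_nonneg fun z => norm_nonneg _
  have h1 : ∫ z, ‖f z‖ ∂haarPolyTorus = ((∫ z, ‖f z‖ ∂haarPolyTorus) ^ p) ^ (1/p) := by
    rw [← Real.rpow_mul hnn, mul_one_div, div_self hp0.ne', Real.rpow_one]
  rw [h1]
  exact Real.rpow_le_rpow (Real.rpow_nonneg hnn p) hjen (by positivity)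

lemma hWeight_nonneg {α : ℝ} (hα : -1 < α) {σ : ℝ} (hσ : 0 < σ) : 0 ≤ hWeight α σ := by
  have hΓ : 0 < Real.Gamma (α + 1) := Real.Gamma_pos_of_pos (by linarith)
  have : (0:ℝ) < 2 ^ (α + 1) := Real.rpow_pos_of_pos (by norm_num) _
  have := Real.rpow_nonneg hσ.le α
  unfold hWeight
  positivity

lemma hWeight_contOn (α : ℝ) : ContinuousOn (hWeight α) (Ioi 0) := by
  unfold hWeight
  apply ContinuousOn.mul
  · apply ContinuousOn.mul continuousOn_const
    exact ContinuousOn.rpow_const continuousOn_id (fun x hx => Or.inl (ne_of_gt hx))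
  · exact (Real.continuous_exp.comp (continuous_const.mul continuous_id)).continuousOn

lemma hWeight_integrableOn {α : ℝ} (hα : -1 < α) : IntegrableOn (hWeight α) (Ioi 0) := by
  have hmaj : IntegrableOn (fun σ : ℝ => (2 ^ (α + 1) / Real.Gamma (α + 1)) *
      (Real.exp (-σ) * σ ^ (α + 1 - 1))) (Ioi 0) :=
    (Real.GammaIntegral_convergent (by linarith)).const_mul _
  refine Integrable.mono hmaj ?_ ?_
  · exact (hWeight_contOn α).aestronglyMeasurable measurableSet_Ioi
  · filter_upwards [self_mem_ae_restrict (measurableSet_Ioi : MeasurableSet (Ioi (0:ℝ)))]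
    intro σ hσ
    have hσ0 : (0:ℝ) < σ := hσ
    have hΓ : 0 < Real.Gamma (α + 1) := Real.Gamma_pos_of_pos (by linarith)
    have hc : (0:ℝ) < 2 ^ (α + 1) / Real.Gamma (α + 1) := by
      have : (0:ℝ) < 2 ^ (α + 1) := Real.rpow_pos_of_pos (by norm_num) _
      positivity
    have h1 : ‖hWeight α σ‖ = hWeight α σ := Real.norm_of_nonneg (hWeight_nonneg hα hσ0)
    rw [h1, Real.norm_eq_abs]
    have h2 : hWeight α σ ≤ (2 ^ (α + 1) / Real.Gamma (α + 1)) * (Real.exp (-σ) * σ ^ (α + 1 - 1)) := by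
      unfold hWeight
      rw [mul_assoc]
      apply mul_le_mul_of_nonneg_left _ hc.le
      rw [show α + 1 - 1 = α by ring, mul_comm (Real.exp (-σ))]
      apply mul_le_mul_of_nonneg_left _ (Real.rpow_nonneg hσ0.le α)
      exact Real.exp_le_exp.mpr (by linarith)
    exact h2.trans (le_abs_self _)


lemma coeff_bound (p α : ℝ) (hp : 1 ≤ p) (hα : -1 < α) :
    ∃ K > (0:ℝ), ∀ (N : ℕ) (a : ℕ → ℂ), ApNorm p α N a ≤ 1 →
      ∀ n ∈ Finset.Icc 1 N, ‖a n‖ ≤ K * n := by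
  have hp0 : (0:ℝ) < p := lt_of_lt_of_le one_pos hp
  have hΓ : 0 < Real.Gamma (α + 1) := Real.Gamma_pos_of_pos (by linarith)
  set c1 : ℝ := min ((1/2:ℝ) ^ α) 1 with hc1
  have hc1pos : 0 < c1 := lt_min (Real.rpow_pos_of_pos (by norm_num) α) one_pos
  set c0 : ℝ := (2 ^ (α + 1) / Real.Gamma (α + 1)) * c1 * Real.exp (-2) with hc0
  have h2pow : (0:ℝ) < 2 ^ (α + 1) := Real.rpow_pos_of_pos (by norm_num) _
  have hc0pos : 0 < c0 := by positivity
  refine ⟨(2 / c0) ^ (1/p), Real.rpow_pos_of_pos (by positivity) _, ?_⟩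
  intro N a hA n hn
  have hn1 : 1 ≤ n := (Finset.mem_Icc.mp hn).1
  have hnR : (1:ℝ) ≤ (n:ℝ) := by exact_mod_cast hn1
  have hnpos : (0:ℝ) < (n:ℝ) := by linarith
  set G : ℝ → ℝ := fun σ =>
    ∫ z, ‖∑ m ∈ Finset.Icc 1 N, transl σ a m * bohrMonomial z m‖ ^ p ∂haarPolyTorus with hG
  have hGnonneg : ∀ σ, 0 ≤ G σ := fun σ =>
    integral_nonneg fun z => Real.rpow_nonneg (norm_nonneg _) _
  have hfc : ∀ σ : ℝ, Continuous fun z : PolyTorus =>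
      ∑ m ∈ Finset.Icc 1 N, transl σ a m * bohrMonomial z m :=
    fun σ => continuous_finset_sum _ fun m _ => continuous_const.mul (continuous_bohr m)
  have hHp : ∀ σ : ℝ, HpNorm p N (transl σ a) ^ p = G σ := by
    intro σ
    rw [HpNorm, ← Real.rpow_mul (hGnonneg σ), one_div, inv_mul_cancel₀ hp0.ne', Real.rpow_one]
  have hGsm : StronglyMeasurable G := by
    have hcont : Continuous fun sz : ℝ × PolyTorus =>
        ‖∑ m ∈ Finset.Icc 1 N, transl sz.1 a m * bohrMonomial sz.2 m‖ ^ p := by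
      apply Continuous.rpow_const _ (fun _ => Or.inr hp0.le)
      apply Continuous.norm
      apply continuous_finset_sum
      intro m hm
      have hm1 : 1 ≤ m := (Finset.mem_Icc.mp hm).1
      have hm0 : (0:ℝ) < (m:ℝ) := by exact_mod_cast hm1
      have htr : Continuous fun sz : ℝ × PolyTorus => transl sz.1 a m := by
        unfold transl
        apply continuous_const.mul
        apply Complex.continuous_ofReal.comp
        have hre : (fun sz : ℝ × PolyTorus => ((m:ℝ) ^ (-sz.1) : ℝ)) =
            fun sz : ℝ × PolyTorus => Real.exp (Real.log m * (-sz.1)) := by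
          funext sz; rw [Real.rpow_def_of_pos hm0]
        show Continuous fun sz : ℝ × PolyTorus => ((m:ℝ) ^ (-sz.1) : ℝ)
        rw [hre]
        exact Real.continuous_exp.comp (continuous_const.mul continuous_fst.neg)
      exact htr.mul ((continuous_bohr m).comp continuous_snd)
    exact hcont.stronglyMeasurable.integral_prod_right'
  set S : ℝ := ∑ m ∈ Finset.Icc 1 N, ‖a m‖ with hS
  have hSnn : 0 ≤ S := Finset.sum_nonneg fun m _ => norm_nonneg _
  have hGle : ∀ σ ∈ Ioi (0:ℝ), G σ ≤ S ^ p := by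
    intro σ hσ
    have hσ0 : (0:ℝ) < σ := hσ
    have hpt : ∀ z : PolyTorus,
        ‖∑ m ∈ Finset.Icc 1 N, transl σ a m * bohrMonomial z m‖ ^ p ≤ S ^ p := by
      intro z
      apply Real.rpow_le_rpow (norm_nonneg _) _ hp0.le
      refine (norm_sum_le _ _).trans ?_
      apply Finset.sum_le_sum
      intro m hm
      have hm1 : (1:ℝ) ≤ (m:ℝ) := by exact_mod_cast (Finset.mem_Icc.mp hm).1
      rw [norm_mul, norm_bohr, mul_one]
      simp only [transl]
      rw [norm_mul, Complex.norm_real, Real.norm_eq_abs,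
        _root_.abs_of_nonneg (Real.rpow_nonneg (by linarith) _)]
      calc ‖a m‖ * (m:ℝ) ^ (-σ) ≤ ‖a m‖ * 1 := by
            apply mul_le_mul_of_nonneg_left _ (norm_nonneg _)
            exact Real.rpow_le_one_of_one_le_of_nonpos hm1 (by linarith)
        _ = ‖a m‖ := mul_one _
    calc G σ ≤ ∫ _z : PolyTorus, S ^ p ∂haarPolyTorus := by
          apply integral_mono _ (integrable_const _) hpt
          exact integrable_cont ((hfc σ).norm.rpow_const fun _ => Or.inr hp0.le)
      _ = S ^ p := by simp
  have hsub : Ioc (1/2:ℝ) 1 ⊆ Ioi (0:ℝ) := fun x hx => lt_trans (by norm_num) hx.1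
  have hWnn : ∀ σ ∈ Ioi (0:ℝ), 0 ≤ hWeight α σ := fun σ hσ => hWeight_nonneg hα hσ
  have hFmeas : AEStronglyMeasurable (fun σ => G σ * hWeight α σ)
      (volume.restrict (Ioi (0:ℝ))) :=
    hGsm.aestronglyMeasurable.mul ((hWeight_contOn α).aestronglyMeasurable measurableSet_Ioi)
  have hFint : IntegrableOn (fun σ => G σ * hWeight α σ) (Ioi 0) := by
    refine Integrable.mono ((hWeight_integrableOn hα).const_mul (S ^ p)) hFmeas ?_
    filter_upwards [self_mem_ae_restrict (measurableSet_Ioi : MeasurableSet (Ioi (0:ℝ)))]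
    intro σ hσ
    rw [Real.norm_eq_abs, Real.norm_eq_abs, _root_.abs_of_nonneg (mul_nonneg (hGnonneg σ) (hWnn σ hσ)),
      _root_.abs_of_nonneg (mul_nonneg (Real.rpow_nonneg hSnn _) (hWnn σ hσ))]
    exact mul_le_mul_of_nonneg_right (hGle σ hσ) (hWnn σ hσ)
  have hI1 : ∫ σ in Ioi (0:ℝ), G σ * hWeight α σ ≤ 1 := by
    have h0 : 0 ≤ ∫ σ in Ioi (0:ℝ), G σ * hWeight α σ :=
      setIntegral_nonneg measurableSet_Ioi fun σ hσ => mul_nonneg (hGnonneg σ) (hWnn σ hσ)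
    have hA' : (∫ σ in Ioi (0:ℝ), G σ * hWeight α σ) ^ (1/p) ≤ 1 := by
      rw [ApNorm] at hA
      simp_rw [hHp] at hA
      exact hA
    calc ∫ σ in Ioi (0:ℝ), G σ * hWeight α σ
        = ((∫ σ in Ioi (0:ℝ), G σ * hWeight α σ) ^ (1/p)) ^ p := by
          rw [← Real.rpow_mul h0, one_div, inv_mul_cancel₀ hp0.ne', Real.rpow_one]
      _ ≤ 1 ^ p := Real.rpow_le_rpow (Real.rpow_nonneg h0 _) hA' hp0.le
      _ = 1 := Real.one_rpow p
  have hlow : ∀ σ ∈ Ioc (1/2:ℝ) 1, (‖a n‖ / n) ^ p * c0 ≤ G σ * hWeight α σ := by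
    intro σ hσ
    have hσ0 : (0:ℝ) < σ := lt_trans (by norm_num) hσ.1
    have hcoef : ‖a n‖ / n ≤ (G σ) ^ (1/p) := by
      have h1 : ‖transl σ a n‖ ≤ ∫ z, ‖∑ m ∈ Finset.Icc 1 N,
          transl σ a m * bohrMonomial z m‖ ∂haarPolyTorus :=
        coeff_norm_le N (transl σ a) hn
      have h2 := integral_norm_le_rpow p hp (hfc σ)
      have h3 : ‖a n‖ / n ≤ ‖transl σ a n‖ := by
        simp only [transl]
        rw [norm_mul, Complex.norm_real, Real.norm_eq_abs,
          _root_.abs_of_nonneg (Real.rpow_nonneg (by linarith) _),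
          div_eq_mul_inv, ← Real.rpow_neg_one (n:ℝ)]
        apply mul_le_mul_of_nonneg_left _ (norm_nonneg _)
        exact Real.rpow_le_rpow_of_exponent_le hnR (by linarith [hσ.2])
      exact h3.trans (h1.trans h2)
    have hGlow : (‖a n‖ / n) ^ p ≤ G σ := by
      calc (‖a n‖/n)^p ≤ ((G σ)^(1/p))^p :=
            Real.rpow_le_rpow (by positivity) hcoef hp0.le
        _ = G σ := by
            rw [← Real.rpow_mul (hGnonneg σ), one_div, inv_mul_cancel₀ hp0.ne', Real.rpow_one]
    have hWlow : c0 ≤ hWeight α σ := by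
      unfold hWeight
      rw [hc0]
      have hb : (0:ℝ) < 2 ^ (α+1) / Real.Gamma (α+1) := by positivity
      have hσα : c1 ≤ σ ^ α := by
        rcases le_or_gt 0 α with h|h
        · exact (min_le_left _ _).trans (Real.rpow_le_rpow (by norm_num) hσ.1.le h)
        · refine (min_le_right _ _).trans ?_
          have h1 := Real.rpow_le_rpow_of_nonpos hσ0 hσ.2 h.le
          simpa using h1
      apply mul_le_mul
      · exact mul_le_mul_of_nonneg_left hσα hb.le
      · exact Real.exp_le_exp.mpr (by linarith [hσ.2])
      · exact (Real.exp_pos _).le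
      · positivity
    exact mul_le_mul hGlow hWlow hc0pos.le (hGnonneg σ)
  have hmain : (‖a n‖ / n) ^ p * c0 * (1 - 1/2) ≤ 1 := by
    have hIoc : ∫ σ in Ioc (1/2:ℝ) 1, G σ * hWeight α σ
        ≤ ∫ σ in Ioi (0:ℝ), G σ * hWeight α σ := by
      apply setIntegral_mono_set hFint
      · filter_upwards [self_mem_ae_restrict (measurableSet_Ioi : MeasurableSet (Ioi (0:ℝ)))]
        exact fun σ hσ => mul_nonneg (hGnonneg σ) (hWnn σ hσ)
      · exact HasSubset.Subset.eventuallyLE hsub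
    have hconst : (‖a n‖ / n) ^ p * c0 * (volume (Ioc (1/2:ℝ) 1)).toReal
        ≤ ∫ σ in Ioc (1/2:ℝ) 1, G σ * hWeight α σ := by
      apply setIntegral_ge_of_const_le_real measurableSet_Ioc
      · rw [Real.volume_Ioc]; exact ENNReal.ofReal_ne_top
      · exact hlow
      · exact hFint.mono_set hsub
    rw [Real.volume_Ioc, ENNReal.toReal_ofReal (by norm_num)] at hconst
    exact hconst.trans (hIoc.trans hI1)
  have hXp : (‖a n‖ / n) ^ p ≤ 2 / c0 := by
    rw [le_div_iff₀ hc0pos]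
    nlinarith [hmain]
  have hX : ‖a n‖ / n ≤ (2 / c0) ^ (1/p) := by
    have h0 : (0:ℝ) ≤ ‖a n‖ / n := by positivity
    calc ‖a n‖ / n = ((‖a n‖ / n) ^ p) ^ (1/p) := by
          rw [← Real.rpow_mul h0, mul_one_div, div_self hp0.ne', Real.rpow_one]
      _ ≤ (2 / c0) ^ (1/p) :=
          Real.rpow_le_rpow (Real.rpow_nonneg h0 p) hXp (by positivity)
  rw [div_le_iff₀ hnpos] at hX
  linarith [hX]


lemma sum_inv_sq_le (N : ℕ) : ∑ n ∈ Finset.Icc 2 N, (((n:ℝ))^2)⁻¹ ≤ 1 := by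
  have key : ∀ M : ℕ, 1 ≤ M → ∑ n ∈ Finset.Icc 2 M, (((n:ℝ))^2)⁻¹ ≤ 1 - ((M:ℝ))⁻¹ := by
    intro M hM
    induction M, hM using Nat.le_induction with
    | base => simp
    | succ M hM ih =>
      rw [Finset.sum_Icc_succ_top (by omega : 2 ≤ M + 1)]
      have hx : (1:ℝ) ≤ (M:ℝ) := by exact_mod_cast hM
      have h1 : (((M:ℝ)+1)^2)⁻¹ ≤ (M:ℝ)⁻¹ - ((M:ℝ)+1)⁻¹ := by
        have e : (M:ℝ)⁻¹ - ((M:ℝ)+1)⁻¹ = ((M:ℝ) * ((M:ℝ)+1))⁻¹ := by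
          field_simp
          ring
        rw [e]
        apply inv_anti₀ (by positivity)
        nlinarith
      push_cast
      linarith
  rcases Nat.lt_or_ge N 2 with h|h
  · interval_cases N <;> simp
  · have h1 := key N (by omega)
    have h2 : (0:ℝ) < (N:ℝ)⁻¹ := by
      have : (0:ℝ) < (N:ℝ) := by exact_mod_cast Nat.lt_of_lt_of_le (by norm_num) h
      positivity
    linarith

/-- `‖δ_s‖_{(A^p_{α,∞})^*} = O(2^{-Re s})` as `Re s → +∞`. -/
theorem stmt3 (p α : ℝ) (hp : 1 ≤ p) (hα : -1 < α) :
    ∃ C > (0 : ℝ), ∃ σ₀ : ℝ, 1 / 2 < σ₀ ∧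
      ∀ s : ℂ, σ₀ ≤ s.re → deltaNormZero p α s ≤ C * (2 : ℝ) ^ (-s.re) := by
  obtain ⟨K, hK, hbound⟩ := coeff_bound p α hp hα
  refine ⟨8 * K, by positivity, 3, by norm_num, ?_⟩
  intro s hs
  have h2σ : (0:ℝ) < (2:ℝ) ^ (-s.re) := Real.rpow_pos_of_pos (by norm_num) _
  rw [deltaNormZero]
  apply Real.sSup_le _ (by positivity)
  rintro x ⟨N, a, ha1, hA, rfl⟩
  have hsum : dirEval N a s = ∑ n ∈ Finset.Icc 2 N, a n * (n:ℂ) ^ (-s) := by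
    rw [dirEval]
    refine (Finset.sum_subset (Finset.Icc_subset_Icc_left (by norm_num)) ?_).symm
    intro x hx hx2
    have hx1 : x = 1 := by
      simp only [Finset.mem_Icc] at hx hx2; omega
    rw [hx1, ha1, zero_mul]
  rw [hsum]
  calc ‖∑ n ∈ Finset.Icc 2 N, a n * (n:ℂ)^(-s)‖
      ≤ ∑ n ∈ Finset.Icc 2 N, ‖a n * (n:ℂ)^(-s)‖ := norm_sum_le _ _
    _ ≤ ∑ n ∈ Finset.Icc 2 N, (8 * K * ((n:ℝ)^2)⁻¹) * (2:ℝ)^(-s.re) := by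
        apply Finset.sum_le_sum
        intro n hn
        obtain ⟨hn2, hnN⟩ := Finset.mem_Icc.mp hn
        have hn0 : 0 < n := by omega
        have hnR : (2:ℝ) ≤ (n:ℝ) := by exact_mod_cast hn2
        have hnpos : (0:ℝ) < (n:ℝ) := by linarith
        rw [norm_mul, Complex.norm_natCast_cpow_of_pos hn0]
        have hcoef : ‖a n‖ ≤ K * n := hbound N a hA n (Finset.mem_Icc.mpr ⟨by omega, hnN⟩)
        have hre : (-s).re = -s.re := by simp
        rw [hre]
        have e1 : (n:ℝ) ^ (-s.re) = (n:ℝ) ^ (-(s.re - 3)) * (n:ℝ) ^ (-3:ℝ) := by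
          rw [← Real.rpow_add hnpos]; ring_nf
        have e2 : (n:ℝ) ^ (-(s.re - 3)) ≤ (2:ℝ) ^ (-(s.re - 3)) :=
          Real.rpow_le_rpow_of_nonpos (by norm_num) hnR (by linarith)
        have e3 : (2:ℝ) ^ (-(s.re - 3)) = 8 * (2:ℝ) ^ (-s.re) := by
          rw [show -(s.re - 3) = -s.re + 3 by ring, Real.rpow_add (by norm_num : (0:ℝ) < 2),
            show ((3:ℝ)) = ((3:ℕ):ℝ) by norm_num, Real.rpow_natCast]
          norm_num
          ring
        have e4 : (n:ℝ) * (n:ℝ)^(-3:ℝ) = ((n:ℝ)^2)⁻¹ := by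
          rw [show (-3:ℝ) = -((3:ℕ):ℝ) by norm_num, Real.rpow_neg hnpos.le, Real.rpow_natCast]
          field_simp
        calc ‖a n‖ * (n:ℝ)^(-s.re)
            ≤ (K * n) * ((n:ℝ)^(-(s.re-3)) * (n:ℝ)^(-3:ℝ)) := by
              rw [← e1]
              exact mul_le_mul hcoef le_rfl (Real.rpow_nonneg hnpos.le _) (by positivity)
          _ ≤ (K * n) * ((2:ℝ)^(-(s.re-3)) * (n:ℝ)^(-3:ℝ)) := by
              apply mul_le_mul_of_nonneg_left _ (by positivity)
              exact mul_le_mul_of_nonneg_right e2 (Real.rpow_nonneg hnpos.le _)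
          _ = 8 * K * ((n:ℝ) * (n:ℝ)^(-3:ℝ)) * (2:ℝ)^(-s.re) := by rw [e3]; ring
          _ = (8 * K * ((n:ℝ)^2)⁻¹) * (2:ℝ)^(-s.re) := by rw [e4]
    _ = (8*K) * (∑ n ∈ Finset.Icc 2 N, ((n:ℝ)^2)⁻¹) * (2:ℝ)^(-s.re) := by
        rw [← Finset.sum_mul, ← Finset.mul_sum]
    _ ≤ (8*K) * 1 * (2:ℝ)^(-s.re) := by
        apply mul_le_mul_of_nonneg_right _ h2σ.le
        exact mul_le_mul_of_nonneg_left (sum_inv_sq_le N) (by positivity)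
    _ = 8*K * (2:ℝ)^(-s.re) := by ring

end
end

section
/- Let f(s) = ∑_{n=2}^∞ a_n n^{-s} be a Dirichlet series with zero constant term which converges at every point of the right half-plane ℂ_+ = {s : Re s > 0}, and let t > 0. Then for every s ∈ ℂ_+ the integral (1/Γ(t)) ∫_0^∞ x^{t-1} f(x+s) dx converges absolutely, the Dirichlet series ∑_{n=2}^∞ a_n (log n)^{-t} n^{-s} converges, and (1/Γ(t)) ∫_0^∞ x^{t-1} f(x+s) dx = ∑_{n=2}^∞ a_n (log n)^{-t} n^{-s}. -/
open MeasureTheory Complex Set Filter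

private lemma cpow_diff_bound {c : ℂ} (hc : 0 < c.re) {a b : ℝ} (ha : 0 < a) (hab : a ≤ b) :
    ‖(a : ℂ) ^ (-c) - (b : ℂ) ^ (-c)‖ ≤
      (‖c‖ / c.re) * (a ^ (-c.re) - b ^ (-c.re)) := by
  have hc0 : c ≠ 0 := fun h => by simp [h] at hc
  have hb : 0 < b := lt_of_lt_of_le ha hab
  have h0uIcc : (0 : ℝ) ∉ uIcc a b := by
    rw [Set.uIcc_of_le hab]; rintro ⟨h1, h2⟩; linarith
  have hderiv : ∀ x ∈ Set.uIcc a b,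
      HasDerivAt (fun y : ℝ => (y : ℂ) ^ (-c) / (-c)) ((x : ℂ) ^ (-c - 1)) x := by
    intro x hx
    have hx0 : x ≠ 0 := by
      rw [Set.uIcc_of_le hab] at hx; exact (lt_of_lt_of_le ha hx.1).ne'
    have hr : (-c - 1 : ℂ) ≠ -1 := by
      intro h; apply hc0; linear_combination -h
    have := hasDerivAt_ofReal_cpow_const' hx0 hr
    have he : -c - 1 + 1 = -c := by ring
    rw [he] at this
    exact this
  have hcont : ContinuousOn (fun x : ℝ => (x : ℂ) ^ (-c - 1)) (Set.uIcc a b) := by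
    intro x hx
    have hx0 : x ≠ 0 := by
      rw [Set.uIcc_of_le hab] at hx; exact (lt_of_lt_of_le ha hx.1).ne'
    exact (Complex.continuousAt_ofReal_cpow_const x _ (Or.inr hx0)).continuousWithinAt
  have hint : IntervalIntegrable (fun x : ℝ => (x : ℂ) ^ (-c - 1)) volume a b :=
    hcont.intervalIntegrable
  have hFTC := intervalIntegral.integral_eq_sub_of_hasDerivAt hderiv hint
  have key : (a : ℂ) ^ (-c) - (b : ℂ) ^ (-c) = c * ∫ x in a..b, (x : ℂ) ^ (-c - 1) := by
    rw [hFTC, div_sub_div_same, div_neg, mul_neg, mul_div_cancel₀ _ hc0, neg_sub]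
  rw [key, norm_mul]
  have h1 : ‖∫ x in a..b, (x : ℂ) ^ (-c - 1)‖ ≤ ∫ x in a..b, x ^ (-c.re - 1) := by
    refine le_trans (intervalIntegral.norm_integral_le_integral_norm hab) (le_of_eq ?_)
    refine intervalIntegral.integral_congr fun x hx => ?_
    have hx0 : 0 < x := by
      rw [Set.uIcc_of_le hab] at hx; exact lt_of_lt_of_le ha hx.1
    rw [Complex.norm_cpow_eq_rpow_re_of_pos hx0]
    norm_num
  have h2 : ∫ x in a..b, x ^ (-c.re - 1) = (a ^ (-c.re) - b ^ (-c.re)) / c.re := by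
    rw [integral_rpow (Or.inr ⟨by intro h; linarith, h0uIcc⟩),
      show -c.re - 1 + 1 = -c.re by ring, div_neg, ← neg_div, neg_sub]
  calc ‖c‖ * ‖∫ x in a..b, (x : ℂ) ^ (-c - 1)‖ ≤ ‖c‖ * ((a ^ (-c.re) - b ^ (-c.re)) / c.re) := by
        rw [← h2]; exact mul_le_mul_of_nonneg_left h1 (norm_nonneg _)
    _ = (‖c‖ / c.re) * (a ^ (-c.re) - b ^ (-c.re)) := by ring

private lemma abel_tail {b : ℕ → ℂ} {M : ℝ}
    (hM : ∀ N : ℕ, ‖∑ i ∈ Finset.range (N + 1), b i‖ ≤ M)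
    {c : ℂ} (hc : 0 < c.re) {N K : ℕ} (hN : 1 ≤ N) (hNK : N < K) :
    ‖∑ n ∈ Finset.Ioc N K, b n * (n : ℂ) ^ (-c)‖ ≤
      M * (2 + ‖c‖ / c.re) * ((N : ℝ) + 1) ^ (-c.re) := by
  have hM0 : 0 ≤ M := le_trans (norm_nonneg _) (hM 0)
  have hsmul : ∀ n : ℕ, b n * (n : ℂ) ^ (-c) = ((n : ℂ) ^ (-c)) • b n := by
    intro n; rw [smul_eq_mul, mul_comm]
  simp_rw [hsmul]
  rw [Finset.sum_Ioc_by_parts (fun n : ℕ => (n : ℂ) ^ (-c)) b hNK]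
  -- norms of partial sums
  have hnorm_cpow : ∀ n : ℕ, 1 ≤ n → ‖(n : ℂ) ^ (-c)‖ = (n : ℝ) ^ (-c.re) := by
    intro n hn
    have hn0 : (0 : ℝ) < n := by exact_mod_cast hn
    rw [show ((n : ℕ) : ℂ) = ((n : ℝ) : ℂ) by push_cast; ring,
      Complex.norm_cpow_eq_rpow_re_of_pos hn0]
    norm_num
  have hKbound : ‖((K : ℂ) ^ (-c)) • ∑ i ∈ Finset.range (K + 1), b i‖ ≤
      ((N : ℝ) + 1) ^ (-c.re) * M := by
    rw [norm_smul, hnorm_cpow K (by omega)]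
    refine mul_le_mul ?_ (hM K) (norm_nonneg _) (by positivity)
    exact Real.rpow_le_rpow_of_nonpos (by positivity) (by exact_mod_cast hNK) (by linarith)
  have hNbound : ‖(((N + 1 : ℕ) : ℂ) ^ (-c)) • ∑ i ∈ Finset.range (N + 1), b i‖ ≤
      ((N : ℝ) + 1) ^ (-c.re) * M := by
    rw [norm_smul, hnorm_cpow (N + 1) (by omega)]
    have hcast : ((N + 1 : ℕ) : ℝ) = (N : ℝ) + 1 := by push_cast; ring
    rw [hcast]
    exact mul_le_mul_of_nonneg_left (hM N) (by positivity)
  -- the telescoping sum bound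
  have hsum : ‖∑ i ∈ Finset.Ioc N (K - 1),
      ((((i + 1 : ℕ) : ℂ)) ^ (-c) - ((i : ℕ) : ℂ) ^ (-c)) • ∑ j ∈ Finset.range (i + 1), b j‖ ≤
      (‖c‖ / c.re) * ((N : ℝ) + 1) ^ (-c.re) * M := by
    refine le_trans (norm_sum_le _ _) ?_
    have hterm : ∀ i ∈ Finset.Ioc N (K - 1),
        ‖((((i + 1 : ℕ) : ℂ)) ^ (-c) - ((i : ℕ) : ℂ) ^ (-c)) • ∑ j ∈ Finset.range (i + 1), b j‖ ≤
        ((‖c‖ / c.re) * ((i : ℝ) ^ (-c.re) - ((i : ℝ) + 1) ^ (-c.re))) * M := by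
      intro i hi
      rw [Finset.mem_Ioc] at hi
      have hi1 : (1 : ℝ) ≤ (i : ℝ) := by exact_mod_cast le_trans hN (le_of_lt hi.1)
      have h2 := Real.rpow_le_rpow_of_nonpos (x := (i:ℝ)) (y := (i:ℝ)+1) (z := -c.re)
        (by linarith) (by linarith) (by linarith)
      rw [norm_smul]
      refine mul_le_mul ?_ (hM i) (norm_nonneg _)
        (mul_nonneg (by positivity) (by linarith))
      rw [norm_sub_rev]
      have hd := cpow_diff_bound hc (show (0:ℝ) < (i : ℝ) by linarith)
        (show (i : ℝ) ≤ (i : ℝ) + 1 by linarith)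
      push_cast at hd ⊢
      exact hd
    refine le_trans (Finset.sum_le_sum hterm) ?_
    rw [← Finset.sum_mul]
    refine mul_le_mul_of_nonneg_right ?_ hM0
    rw [← Finset.mul_sum]
    refine mul_le_mul_of_nonneg_left ?_ (by positivity)
    -- telescoping
    have hIoc : Finset.Ioc N (K - 1) = Finset.Ico (N + 1) K := by
      rw [← Finset.Ico_add_one_add_one_eq_Ioc]
      congr 1
      omega
    rw [hIoc, Finset.sum_Ico_eq_sum_range]
    have heq : ∀ i ∈ Finset.range (K - (N + 1)),
        ((N + 1 + i : ℕ) : ℝ) ^ (-c.re) - (((N + 1 + i : ℕ) : ℝ) + 1) ^ (-c.re) =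
        (fun j : ℕ => ((N : ℝ) + 1 + j) ^ (-c.re)) i -
          (fun j : ℕ => ((N : ℝ) + 1 + j) ^ (-c.re)) (i + 1) := by
      intro i _
      simp only []
      push_cast
      ring_nf
    rw [Finset.sum_congr rfl heq,
      Finset.sum_range_sub' (fun j : ℕ => ((N : ℝ) + 1 + j) ^ (-c.re)) (K - (N + 1))]
    simp only [Nat.cast_zero, add_zero]
    have hpos : (0:ℝ) ≤ ((N : ℝ) + 1 + ((K - (N + 1) : ℕ) : ℝ)) ^ (-c.re) := by positivity
    linarith
  refine le_trans (norm_sub_le _ _) ?_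
  have h1 := le_trans (norm_sub_le _ _) (add_le_add hKbound hNbound)
  have heq2 : M * (2 + ‖c‖ / c.re) * ((N : ℝ) + 1) ^ (-c.re) =
      (((N : ℝ) + 1) ^ (-c.re) * M + ((N : ℝ) + 1) ^ (-c.re) * M) +
      (‖c‖ / c.re) * ((N : ℝ) + 1) ^ (-c.re) * M := by ring
  rw [heq2]
  exact add_le_add h1 hsum

private lemma tail_bound {b : ℕ → ℂ} {M : ℝ}
    (hM : ∀ N : ℕ, ‖∑ i ∈ Finset.range (N + 1), b i‖ ≤ M)
    {c : ℂ} (hc : 0 < c.re) {l : ℂ}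
    (hl : Filter.Tendsto (fun K => ∑ n ∈ Finset.range (K + 1), b n * (n : ℂ) ^ (-c))
      Filter.atTop (nhds l)) {N : ℕ} (hN : 1 ≤ N) :
    ‖l - ∑ n ∈ Finset.range (N + 1), b n * (n : ℂ) ^ (-c)‖ ≤
      M * (2 + ‖c‖ / c.re) * ((N : ℝ) + 1) ^ (-c.re) := by
  have htend : Filter.Tendsto
      (fun K => ‖(∑ n ∈ Finset.range (K + 1), b n * (n : ℂ) ^ (-c)) -
        ∑ n ∈ Finset.range (N + 1), b n * (n : ℂ) ^ (-c)‖) Filter.atTop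
      (nhds ‖l - ∑ n ∈ Finset.range (N + 1), b n * (n : ℂ) ^ (-c)‖) :=
    (hl.sub tendsto_const_nhds).norm
  refine le_of_tendsto htend ?_
  filter_upwards [eventually_gt_atTop N] with K hK
  have hsplit : (∑ n ∈ Finset.range (K + 1), b n * (n : ℂ) ^ (-c)) -
      (∑ n ∈ Finset.range (N + 1), b n * (n : ℂ) ^ (-c)) =
      ∑ n ∈ Finset.Ioc N K, b n * (n : ℂ) ^ (-c) := by
    have := Finset.sum_Ico_consecutive (fun n => b n * (n : ℂ) ^ (-c))
      (Nat.zero_le (N + 1)) (by omega : N + 1 ≤ K + 1)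
    rw [Finset.range_eq_Ico, Finset.range_eq_Ico, ← Finset.Ico_add_one_add_one_eq_Ioc]
    linear_combination -this
  rw [hsplit]
  exact abel_tail hM hc hN hK

/-- action of the Riemann–Liouville operator `I_t` on a convergent
Dirichlet series with zero constant term. -/
theorem stmt4 (a : ℕ → ℂ) (ha0 : a 0 = 0) (ha1 : a 1 = 0) (f : ℂ → ℂ)
    (hf : ∀ s : ℂ, 0 < s.re →
      Filter.Tendsto (fun N => ∑ n ∈ Finset.range (N + 1), a n * (n : ℂ) ^ (-s))
        Filter.atTop (nhds (f s)))
    (t : ℝ) (ht : 0 < t) (s : ℂ) (hs : 0 < s.re) :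
    MeasureTheory.IntegrableOn (fun x : ℝ => (x ^ (t - 1) : ℝ) • f ((x : ℂ) + s))
      (Set.Ioi 0) ∧
    ∃ L : ℂ,
      Filter.Tendsto
        (fun N => ∑ n ∈ Finset.range (N + 1),
          a n * ((Real.log n ^ (-t) : ℝ) : ℂ) * (n : ℂ) ^ (-s))
        Filter.atTop (nhds L) ∧
      (1 / (Real.Gamma t : ℂ)) *
          ∫ x in Set.Ioi (0 : ℝ), (x ^ (t - 1) : ℝ) • f ((x : ℂ) + s) = L := by
  have hσ2 : (0:ℝ) < s.re / 2 := by linarith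
  obtain ⟨σ2, hσ2def⟩ : ∃ y : ℝ, y = s.re / 2 := ⟨_, rfl⟩
  rw [← hσ2def] at hσ2
  obtain ⟨b, hbdef⟩ : ∃ b : ℕ → ℂ, b = fun n => a n * (n : ℂ) ^ (-((σ2 : ℂ))) := ⟨_, rfl⟩
  have hbconv : Filter.Tendsto (fun N => ∑ n ∈ Finset.range (N + 1), b n)
      Filter.atTop (nhds (f (σ2 : ℂ))) := by
    rw [hbdef]; exact hf _ (by simpa using hσ2)
  obtain ⟨M, hM⟩ : ∃ M : ℝ, ∀ N, ‖∑ n ∈ Finset.range (N + 1), b n‖ ≤ M := by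
    obtain ⟨M, hMb⟩ := hbconv.norm.bddAbove_range
    exact ⟨M, fun N => hMb ⟨N, rfl⟩⟩
  have hM0 : 0 ≤ M := le_trans (norm_nonneg _) (hM 0)
  -- term identity
  have hbterm : ∀ (c : ℂ) (n : ℕ),
      a n * (n : ℂ) ^ (-((σ2 : ℂ) + c)) = b n * (n : ℂ) ^ (-c) := by
    intro c n
    rcases Nat.eq_zero_or_pos n with h0 | hpos
    · subst h0; simp [hbdef, ha0]
    · have hn0 : (n : ℂ) ≠ 0 := Nat.cast_ne_zero.mpr hpos.ne'
      rw [hbdef]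
      simp only []
      rw [show -((σ2 : ℂ) + c) = -(σ2:ℂ) + -c by ring, Complex.cpow_add _ _ hn0, mul_assoc]
  have hT : ∀ c : ℂ, 0 < c.re →
      Filter.Tendsto (fun K => ∑ n ∈ Finset.range (K + 1), b n * (n : ℂ) ^ (-c))
        Filter.atTop (nhds (f ((σ2 : ℂ) + c))) := by
    intro c hc
    have h1 := hf ((σ2 : ℂ) + c) (by simp [Complex.add_re]; linarith)
    exact h1.congr fun K => Finset.sum_congr rfl fun n _ => hbterm c n
  -- constants
  obtain ⟨C1, hC1def⟩ : ∃ y : ℝ, y = 1 + (‖s‖ + σ2) / σ2 := ⟨_, rfl⟩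
  have hC10 : 0 ≤ C1 := by rw [hC1def]; positivity
  obtain ⟨C, hCdef⟩ : ∃ y : ℝ, y = M * (2 + C1) := ⟨_, rfl⟩
  have hC0 : 0 ≤ C := by rw [hCdef]; positivity
  -- tail bound specialized
  have htail : ∀ x : ℝ, 0 ≤ x → ∀ N : ℕ, 1 ≤ N →
      ‖f ((x : ℂ) + s) - ∑ n ∈ Finset.range (N + 1), a n * (n : ℂ) ^ (-((x : ℂ) + s))‖ ≤
        C * ((N : ℝ) + 1) ^ (-(x + σ2)) := by
    intro x hx N hN
    obtain ⟨c, hcdef⟩ : ∃ c : ℂ, c = (x : ℂ) + s - (σ2 : ℂ) := ⟨_, rfl⟩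
    have hcre : c.re = x + σ2 := by
      rw [hcdef, hσ2def]
      simp [Complex.add_re, Complex.sub_re]
      ring
    have hcrepos : 0 < c.re := by rw [hcre]; positivity
    have hσ2c : (σ2 : ℂ) + c = (x : ℂ) + s := by rw [hcdef]; ring
    have hcnorm : ‖c‖ ≤ x + (‖s‖ + σ2) := by
      rw [hcdef]
      calc ‖(x : ℂ) + s - (σ2 : ℂ)‖ ≤ ‖(x : ℂ) + s‖ + ‖((σ2 : ℝ) : ℂ)‖ := norm_sub_le _ _
        _ ≤ (‖(x : ℂ)‖ + ‖s‖) + ‖((σ2 : ℝ) : ℂ)‖ := by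
            exact add_le_add (norm_add_le _ _) le_rfl
        _ = x + (‖s‖ + σ2) := by
            rw [Complex.norm_real, Complex.norm_real, Real.norm_eq_abs, Real.norm_eq_abs,
              _root_.abs_of_nonneg hx, _root_.abs_of_nonneg hσ2.le]
            ring
    have hratio : ‖c‖ / c.re ≤ C1 := by
      rw [div_le_iff₀ hcrepos, hcre]
      have hq : (‖s‖ + σ2) / σ2 * σ2 = ‖s‖ + σ2 := div_mul_cancel₀ _ hσ2.ne'
      have hq0 : 0 ≤ (‖s‖ + σ2) / σ2 := by positivity
      have h1 : C1 * (x + σ2) = x + σ2 + ((‖s‖ + σ2) / σ2) * x + ((‖s‖ + σ2) / σ2) * σ2 := by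
        rw [hC1def]; ring
      linarith [mul_nonneg hq0 hx]
    have h1 := tail_bound hM hcrepos (hT c hcrepos) hN
    rw [hσ2c] at h1
    have h2 : ∑ n ∈ Finset.range (N + 1), b n * (n : ℂ) ^ (-c) =
        ∑ n ∈ Finset.range (N + 1), a n * (n : ℂ) ^ (-((x : ℂ) + s)) := by
      refine Finset.sum_congr rfl fun n _ => ?_
      rw [← hbterm c n, hσ2c]
    rw [h2] at h1
    have hratio' : ‖c‖ / (x + σ2) ≤ C1 := hcre ▸ hratio
    refine le_trans h1 ?_
    rw [hcre, hCdef]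
    refine mul_le_mul_of_nonneg_right ?_ (by positivity)
    exact mul_le_mul_of_nonneg_left (by linarith) hM0
  -- bound on f
  have hfbound : ∀ x : ℝ, 0 ≤ x → ‖f ((x : ℂ) + s)‖ ≤ C * (2 : ℝ) ^ (-(x + σ2)) := by
    intro x hx
    have h1 := htail x hx 1 le_rfl
    have h2 : ∑ n ∈ Finset.range 2, a n * (n : ℂ) ^ (-((x : ℂ) + s)) = 0 := by
      rw [Finset.sum_range_succ, Finset.sum_range_one, ha0, ha1]
      simp
    rw [h2, sub_zero] at h1
    refine le_trans h1 (le_of_eq ?_)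
    norm_num
  have h2x : ∀ x : ℝ, 0 ≤ x → (2 : ℝ) ^ (-(x + σ2)) ≤ Real.exp (-Real.log 2 * x) := by
    intro x hx
    rw [Real.rpow_def_of_pos two_pos]
    refine Real.exp_le_exp.mpr ?_
    have hl2 : 0 < Real.log 2 := Real.log_pos one_lt_two
    nlinarith
  -- bound on partial sums
  have hSbound : ∀ (N : ℕ) (x : ℝ), 0 < x →
      ‖∑ n ∈ Finset.range (N + 1), a n * (n : ℂ) ^ (-((x : ℂ) + s))‖ ≤
        2 * C * Real.exp (-Real.log 2 * x) := by
    intro N x hx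
    rcases Nat.eq_zero_or_pos N with h0 | hN
    · subst h0
      simp only [zero_add, Finset.sum_range_one, ha0, zero_mul, norm_zero]
      positivity
    · have h1 := htail x hx.le N hN
      have h2 := hfbound x hx.le
      have h3 : ((N : ℝ) + 1) ^ (-(x + σ2)) ≤ (2 : ℝ) ^ (-(x + σ2)) := by
        refine Real.rpow_le_rpow_of_nonpos two_pos ?_ (by nlinarith)
        have : (1 : ℝ) ≤ (N : ℝ) := by exact_mod_cast hN
        linarith
      calc ‖∑ n ∈ Finset.range (N + 1), a n * (n : ℂ) ^ (-((x : ℂ) + s))‖ ≤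
            ‖f ((x : ℂ) + s)‖ +
              ‖f ((x : ℂ) + s) - ∑ n ∈ Finset.range (N + 1), a n * (n : ℂ) ^ (-((x : ℂ) + s))‖ := by
            have := norm_sub_le (f ((x : ℂ) + s))
              (f ((x : ℂ) + s) - ∑ n ∈ Finset.range (N + 1), a n * (n : ℂ) ^ (-((x : ℂ) + s)))
            simpa using this
        _ ≤ C * (2 : ℝ) ^ (-(x + σ2)) + C * ((N : ℝ) + 1) ^ (-(x + σ2)) := add_le_add h2 h1
        _ ≤ 2 * C * Real.exp (-Real.log 2 * x) := by
            have e5 := mul_le_mul_of_nonneg_left (h2x x hx.le) hC0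
            have e6 := mul_le_mul_of_nonneg_left h3 hC0
            linarith
  -- dominating function
  obtain ⟨g, hgdef⟩ : ∃ g : ℝ → ℝ, g = fun x => 2 * C * (x ^ (t - 1) * Real.exp (-Real.log 2 * x)) :=
    ⟨_, rfl⟩
  have hgint : Integrable g (volume.restrict (Set.Ioi 0)) := by
    rw [hgdef]
    have h1 := integrableOn_rpow_mul_exp_neg_mul_rpow
      (show (-1:ℝ) < t - 1 by linarith) one_pos (Real.log_pos one_lt_two)
    simp only [Real.rpow_one] at h1
    exact h1.const_mul (2 * C)
  -- the approximating functions
  obtain ⟨F, hFdef⟩ : ∃ F : ℕ → ℝ → ℂ, F = fun N x =>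
      (x ^ (t - 1) : ℝ) • ∑ n ∈ Finset.range (N + 1), a n * (n : ℂ) ^ (-((x : ℂ) + s)) :=
    ⟨_, rfl⟩
  have hFmeas : ∀ N, AEStronglyMeasurable (F N) (volume.restrict (Set.Ioi 0)) := by
    intro N
    rw [hFdef]
    have hcont1 : ContinuousOn (fun x : ℝ => (x ^ (t - 1) : ℝ)) (Set.Ioi 0) := fun x hx =>
      (Real.continuousAt_rpow_const x (t - 1) (Or.inl (ne_of_gt hx))).continuousWithinAt
    have hcont2 : Continuous (fun x : ℝ =>
        ∑ n ∈ Finset.range (N + 1), a n * (n : ℂ) ^ (-((x : ℂ) + s))) := by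
      refine continuous_finset_sum _ fun n _ => ?_
      rcases Nat.eq_zero_or_pos n with h0 | hpos
      · subst h0
        simp only [ha0, zero_mul]
        exact continuous_const
      · have hn0 : ((n : ℕ) : ℂ) ≠ 0 := Nat.cast_ne_zero.mpr hpos.ne'
        exact continuous_const.mul
          (((Complex.continuous_ofReal.add continuous_const).neg).const_cpow (Or.inl hn0))
    exact (hcont1.smul hcont2.continuousOn).aestronglyMeasurable measurableSet_Ioi
  have hFbound : ∀ N, ∀ᵐ x ∂(volume.restrict (Set.Ioi 0)), ‖F N x‖ ≤ g x := by
    intro N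
    refine (ae_restrict_iff' measurableSet_Ioi).mpr (ae_of_all _ fun x hx => ?_)
    rw [hFdef, hgdef]
    simp only []
    rw [norm_smul, Real.norm_eq_abs, _root_.abs_of_nonneg (Real.rpow_nonneg (le_of_lt hx) _)]
    calc x ^ (t - 1) * ‖∑ n ∈ Finset.range (N + 1), a n * (n : ℂ) ^ (-((x : ℂ) + s))‖ ≤
        x ^ (t - 1) * (2 * C * Real.exp (-Real.log 2 * x)) :=
          mul_le_mul_of_nonneg_left (hSbound N x hx) (Real.rpow_nonneg (le_of_lt hx) _)
      _ = 2 * C * (x ^ (t - 1) * Real.exp (-Real.log 2 * x)) := by ring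
  have hFlim : ∀ᵐ x ∂(volume.restrict (Set.Ioi 0)),
      Filter.Tendsto (fun N => F N x) Filter.atTop (nhds ((x ^ (t - 1) : ℝ) • f ((x : ℂ) + s))) := by
    refine (ae_restrict_iff' measurableSet_Ioi).mpr (ae_of_all _ fun x hx => ?_)
    rw [hFdef]
    exact (hf ((x : ℂ) + s) (by simp [Complex.add_re]; linarith [mem_Ioi.mp hx])).const_smul _
  have hmeas_lim : AEStronglyMeasurable (fun x : ℝ => (x ^ (t - 1) : ℝ) • f ((x : ℂ) + s))
      (volume.restrict (Set.Ioi 0)) :=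
    aestronglyMeasurable_of_tendsto_ae Filter.atTop hFmeas hFlim
  have hInt : MeasureTheory.IntegrableOn (fun x : ℝ => (x ^ (t - 1) : ℝ) • f ((x : ℂ) + s))
      (Set.Ioi 0) := by
    refine hgint.mono' hmeas_lim ?_
    refine (ae_restrict_iff' measurableSet_Ioi).mpr (ae_of_all _ fun x hx => ?_)
    have hx0 : (0:ℝ) ≤ x := le_of_lt hx
    have hb1 : ‖f ((x : ℂ) + s)‖ ≤ 2 * C * Real.exp (-Real.log 2 * x) := by
      have e1 := hfbound x hx0
      have e2 := h2x x hx0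
      have e4 := Real.exp_pos (-Real.log 2 * x)
      have e5 := mul_le_mul_of_nonneg_left e2 hC0
      have e6 := mul_nonneg hC0 e4.le
      linarith
    rw [hgdef]
    simp only []
    rw [norm_smul, Real.norm_eq_abs, _root_.abs_of_nonneg (Real.rpow_nonneg hx0 _)]
    have e7 := mul_le_mul_of_nonneg_left hb1 (Real.rpow_nonneg hx0 (t - 1))
    nlinarith [e7]
  refine ⟨hInt, ?_⟩
  have hTendInt := MeasureTheory.tendsto_integral_of_dominated_convergence
    g hFmeas hgint hFbound hFlim
  -- per-term integrals
  have hΓpos : 0 < Real.Gamma t := Real.Gamma_pos_of_pos ht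
  have hterm : ∀ n : ℕ, 2 ≤ n →
      MeasureTheory.IntegrableOn
        (fun x : ℝ => (x ^ (t - 1) : ℝ) • (a n * (n : ℂ) ^ (-((x : ℂ) + s)))) (Set.Ioi 0) ∧
      ∫ x in Set.Ioi (0:ℝ), (x ^ (t - 1) : ℝ) • (a n * (n : ℂ) ^ (-((x : ℂ) + s))) =
        a n * (n : ℂ) ^ (-s) * (((1 / Real.log n) ^ t * Real.Gamma t : ℝ) : ℂ) := by
    intro n hn
    have hn1 : (1:ℝ) < (n:ℝ) := by exact_mod_cast lt_of_lt_of_le one_lt_two hn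
    have hnpos : (0:ℝ) < (n:ℝ) := by linarith
    have hn0 : ((n : ℕ) : ℂ) ≠ 0 := Nat.cast_ne_zero.mpr (by omega)
    have hlog : 0 < Real.log n := Real.log_pos hn1
    have heqfun : Set.EqOn
        (fun x : ℝ => (x ^ (t - 1) : ℝ) • (a n * (n : ℂ) ^ (-((x : ℂ) + s))))
        (fun x : ℝ => (a n * (n : ℂ) ^ (-s)) *
          ((x ^ (t - 1) * Real.exp (-(Real.log n * x)) : ℝ) : ℂ)) (Set.Ioi 0) := by
      intro x hx
      simp only []
      rw [show -((x:ℂ) + s) = -s + -(x:ℂ) by ring, Complex.cpow_add _ _ hn0]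
      have hcast : ((n : ℕ) : ℂ) ^ (-(x:ℂ)) = ((((n:ℝ) ^ (-x) : ℝ)) : ℂ) := by
        rw [Complex.ofReal_cpow hnpos.le]
        push_cast
        ring_nf
      have hexp : ((n:ℝ)) ^ (-x) = Real.exp (-(Real.log n * x)) := by
        rw [Real.rpow_def_of_pos hnpos]
        congr 1
        ring
      rw [hcast, hexp, Complex.real_smul, Complex.ofReal_mul]
      ring
    have hbase : MeasureTheory.IntegrableOn
        (fun x : ℝ => x ^ (t - 1) * Real.exp (-(Real.log n * x))) (Set.Ioi 0) := by
      have h1 := integrableOn_rpow_mul_exp_neg_mul_rpow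
        (show (-1:ℝ) < t - 1 by linarith) one_pos hlog
      simp only [Real.rpow_one] at h1
      refine h1.congr_fun (fun x _ => ?_) measurableSet_Ioi
      ring_nf
    have hniceInt : MeasureTheory.IntegrableOn
        (fun x : ℝ => (a n * (n : ℂ) ^ (-s)) *
          ((x ^ (t - 1) * Real.exp (-(Real.log n * x)) : ℝ) : ℂ)) (Set.Ioi 0) :=
      (hbase.ofReal.const_mul _)
    constructor
    · exact hniceInt.congr_fun heqfun.symm measurableSet_Ioi
    · rw [MeasureTheory.setIntegral_congr_fun measurableSet_Ioi heqfun,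
        MeasureTheory.integral_const_mul]
      congr 1
      rw [← Real.integral_rpow_mul_exp_neg_mul_Ioi ht hlog]
      exact integral_ofReal
  -- n ≤ 1 terms vanish
  have hzero : ∀ n : ℕ, n ≤ 1 →
      (fun x : ℝ => (x ^ (t - 1) : ℝ) • (a n * (n : ℂ) ^ (-((x : ℂ) + s)))) =
        fun _ : ℝ => (0 : ℂ) := by
    intro n hn
    funext x
    interval_cases n
    · rw [ha0]; simp
    · rw [ha1]; simp
  have hintN : ∀ (N n : ℕ), n ∈ Finset.range (N + 1) →
      MeasureTheory.IntegrableOn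
        (fun x : ℝ => (x ^ (t - 1) : ℝ) • (a n * (n : ℂ) ^ (-((x : ℂ) + s)))) (Set.Ioi 0) := by
    intro N n _
    rcases le_or_gt n 1 with h1 | h1
    · rw [hzero n h1]
      exact integrable_zero _ _ _
    · exact (hterm n h1).1
  have hFint : ∀ N : ℕ, ∫ x in Set.Ioi (0:ℝ), F N x =
      ∑ n ∈ Finset.range (N + 1),
        ∫ x in Set.Ioi (0:ℝ), (x ^ (t - 1) : ℝ) • (a n * (n : ℂ) ^ (-((x : ℂ) + s))) := by
    intro N
    rw [hFdef]
    simp only []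
    have hswap : (fun x : ℝ => (x ^ (t - 1) : ℝ) •
        ∑ n ∈ Finset.range (N + 1), a n * (n : ℂ) ^ (-((x : ℂ) + s))) =
        fun x : ℝ => ∑ n ∈ Finset.range (N + 1),
          (x ^ (t - 1) : ℝ) • (a n * (n : ℂ) ^ (-((x : ℂ) + s))) := by
      funext x
      rw [Finset.smul_sum]
    rw [hswap, MeasureTheory.integral_finset_sum _ (fun n hn => hintN N n hn)]
  have hΓ0 : ((Real.Gamma t : ℝ) : ℂ) ≠ 0 := Complex.ofReal_ne_zero.mpr hΓpos.ne'
  have hP : ∀ N : ℕ,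
      ∑ n ∈ Finset.range (N + 1), a n * ((Real.log n ^ (-t) : ℝ) : ℂ) * (n : ℂ) ^ (-s) =
        (1 / (Real.Gamma t : ℂ)) * ∫ x in Set.Ioi (0:ℝ), F N x := by
    intro N
    rw [hFint N, Finset.mul_sum]
    refine Finset.sum_congr rfl fun n _ => ?_
    rcases le_or_gt n 1 with h1 | h1
    · rw [hzero n h1]
      interval_cases n
      · rw [ha0]; simp
      · rw [ha1]; simp
    · rw [(hterm n h1).2]
      have hn1 : (1:ℝ) < (n:ℝ) := by exact_mod_cast h1
      have hlog : 0 < Real.log n := Real.log_pos hn1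
      have h2 : ((1 / Real.log n) ^ t : ℝ) = Real.log n ^ (-t) := by
        rw [one_div, Real.inv_rpow hlog.le, ← Real.rpow_neg hlog.le]
      rw [← h2, Complex.ofReal_mul]
      field_simp
  refine ⟨(1 / (Real.Gamma t : ℂ)) *
    ∫ x in Set.Ioi (0:ℝ), (x ^ (t - 1) : ℝ) • f ((x : ℂ) + s), ?_, rfl⟩
  have hfinal := hTendInt.const_mul ((1 : ℂ) / (Real.Gamma t : ℂ))
  refine Filter.Tendsto.congr (fun N => (hP N).symm) ?_
  rw [hFdef] at hfinal ⊢
  exact hfinal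
end

section
/- For every t > 0, ∫_{-∞}^{+∞} e^{1-iy}/(1-iy)^{t+1} dy = 2π/Γ(t+1), where w^{t+1} = exp((t+1)·Log w) denotes the principal branch of the power on the right half-plane Re w > 0. -/
open MeasureTheory Complex

open Set Filter
open scoped Real FourierTransform

noncomputable def Fz (t : ℝ) (z : ℂ) : ℂ := ∫ x : ℝ in Ioi 0, (x:ℂ) ^ (t:ℂ) * Complex.exp (-z * x)

lemma meas_aux (t : ℝ) (z : ℂ) :
    AEStronglyMeasurable (fun x : ℝ => (x:ℂ) ^ (t:ℂ) * Complex.exp (-z * x))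
      (volume.restrict (Ioi 0)) := by
  apply ContinuousOn.aestronglyMeasurable _ measurableSet_Ioi
  apply ContinuousOn.mul
  · intro x hx
    exact (continuousAt_ofReal_cpow_const x _ (Or.inr (ne_of_gt hx))).continuousWithinAt
  · fun_prop

lemma norm_aux (t : ℝ) (z : ℂ) {x : ℝ} (hx : 0 < x) :
    ‖(x:ℂ) ^ (t:ℂ) * Complex.exp (-z * x)‖ = x ^ t * Real.exp (-z.re * x) := by
  rw [norm_mul, Complex.norm_exp,
    Complex.norm_cpow_eq_rpow_re_of_pos (by exact_mod_cast hx)]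
  simp

lemma int_aux (t : ℝ) (ht : -1 < t) {c : ℝ} (hc : 0 < c) :
    IntegrableOn (fun x : ℝ => x ^ t * Real.exp (-c * x)) (Ioi 0) := by
  have := integrableOn_rpow_mul_exp_neg_mul_rpow (p := 1) ht one_pos hc
  simpa [Real.rpow_one] using this

lemma Fz_integrand_integrable (t : ℝ) (ht : 0 < t) {z : ℂ} (hz : 0 < z.re) :
    IntegrableOn (fun x : ℝ => (x:ℂ) ^ (t:ℂ) * Complex.exp (-z * x)) (Ioi 0) := by
  refine (int_aux t (by linarith) hz).integrable.mono' (meas_aux t z) ?_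
  filter_upwards [ae_restrict_mem measurableSet_Ioi] with x hx
  rw [norm_aux t z hx]

lemma Fz_differentiableOn (t : ℝ) (ht : 0 < t) :
    DifferentiableOn ℂ (Fz t) {z : ℂ | 0 < z.re} := by
  intro z hz
  simp only [mem_setOf_eq] at hz
  have key := hasDerivAt_integral_of_dominated_loc_of_deriv_le
    (F := fun z (x : ℝ) => (x:ℂ) ^ (t:ℂ) * Complex.exp (-z * x))
    (F' := fun z (x : ℝ) => (x:ℂ) ^ (t:ℂ) * (-x * Complex.exp (-z * x)))
    (μ := volume.restrict (Ioi 0)) (x₀ := z)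
    (bound := fun x : ℝ => x ^ (t + 1) * Real.exp (-(z.re / 2) * x))
    (Metric.ball_mem_nhds z (half_pos hz))
    (Eventually.of_forall fun z' => meas_aux t z')
    (Fz_integrand_integrable t ht hz)
    ?_ ?_ ?_ ?_
  · exact (key.2.differentiableAt.differentiableWithinAt)
  · -- measurability of F'
    apply ContinuousOn.aestronglyMeasurable _ measurableSet_Ioi
    apply ContinuousOn.mul
    · intro x hx
      exact (continuousAt_ofReal_cpow_const x _ (Or.inr (ne_of_gt hx))).continuousWithinAt
    · fun_prop
  · -- bound
    filter_upwards [ae_restrict_mem measurableSet_Ioi] with x hx z' hz'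
    rw [mem_Ioi] at hx
    have hre : z.re / 2 ≤ z'.re := by
      have := Complex.abs_re_le_norm (z' - z)
      rw [Complex.sub_re] at this
      have h2 : |z'.re - z.re| < z.re / 2 := lt_of_le_of_lt this (mem_ball_iff_norm.mp hz')
      have := abs_lt.mp h2
      linarith [this.1]
    have hnorm : ‖(x:ℂ) ^ (t:ℂ) * (-(x:ℂ) * Complex.exp (-z' * x))‖
        = x ^ t * (x * Real.exp (-z'.re * x)) := by
      rw [norm_mul, norm_mul,
        Complex.norm_cpow_eq_rpow_re_of_pos hx, Complex.ofReal_re, norm_neg,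
        Complex.norm_real, Real.norm_eq_abs, abs_of_pos hx,
        Complex.norm_exp]
      congr 2
      simp [Complex.mul_re]
    rw [hnorm, Real.rpow_add hx, Real.rpow_one]
    have hexp : Real.exp (-z'.re * x) ≤ Real.exp (-(z.re/2) * x) := by
      apply Real.exp_le_exp.mpr
      nlinarith [mul_le_mul_of_nonneg_right hre hx.le]
    calc x ^ t * (x * Real.exp (-z'.re * x))
        ≤ x ^ t * (x * Real.exp (-(z.re/2) * x)) := by
          exact mul_le_mul_of_nonneg_left (mul_le_mul_of_nonneg_left hexp hx.le)
            (Real.rpow_nonneg hx.le t)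
      _ = x ^ t * x * Real.exp (-(z.re/2) * x) := by ring
  · exact (int_aux (t+1) (by linarith) (half_pos hz)).integrable
  · -- differentiability
    filter_upwards [ae_restrict_mem measurableSet_Ioi] with x hx z' _
    have h1 : HasDerivAt (fun w : ℂ => Complex.exp (-w * x)) (-x * Complex.exp (-z' * x)) z' := by
      have h0 : HasDerivAt (fun w : ℂ => -w * (x:ℂ)) (-x : ℂ) z' := by
        simpa using ((hasDerivAt_id z').neg.mul_const (x:ℂ))
      simpa [mul_comm] using h0.cexp
    exact h1.const_mul _

lemma Fz_eq_real (t : ℝ) (ht : 0 < t) {r : ℝ} (hr : 0 < r) :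
    Fz t (r : ℂ) = Complex.Gamma (t + 1) * (r : ℂ) ^ (-(t:ℂ) - 1) := by
  have h := integral_cpow_mul_exp_neg_mul_Ioi (a := (t:ℂ) + 1)
    (by simp [ht.le]; positivity) hr
  have h2 : Fz t (r : ℂ) = ∫ x : ℝ in Ioi 0, (x:ℂ) ^ ((t:ℂ) + 1 - 1) * Complex.exp (-((r:ℝ) * x)) := by
    unfold Fz
    congr 1
    ext x
    push_cast
    ring_nf
  rw [h2, h]
  rw [mul_comm]
  congr 1
  rw [one_div, inv_cpow _ _ (by
    rw [Complex.arg_ofReal_of_nonneg hr.le]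
    exact Real.pi_ne_zero.symm), ← Complex.cpow_neg]
  congr 1
  ring

lemma Fz_eq (t : ℝ) (ht : 0 < t) {z : ℂ} (hz : 0 < z.re) :
    Fz t z = Complex.Gamma (t + 1) * z ^ (-(t:ℂ) - 1) := by
  set U : Set ℂ := {z : ℂ | 0 < z.re} with hU
  have hUopen : IsOpen U := isOpen_lt continuous_const Complex.continuous_re
  have hF : AnalyticOnNhd ℂ (Fz t) U :=
    (Fz_differentiableOn t ht).analyticOnNhd hUopen
  have hG : AnalyticOnNhd ℂ (fun z => Complex.Gamma (t + 1) * z ^ (-(t:ℂ) - 1)) U := by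
    apply DifferentiableOn.analyticOnNhd _ hUopen
    intro w hw
    apply DifferentiableWithinAt.const_mul
    apply DifferentiableAt.differentiableWithinAt
    exact (differentiableAt_id.cpow (differentiableAt_const _)
      (Or.inl (lt_of_lt_of_le hw le_rfl)))
  have hconn : IsPreconnected U := (convex_halfSpace_re_gt 0).isPreconnected
  have h1 : (1 : ℂ) ∈ U := by simp [hU]
  have hfreq : ∃ᶠ w in nhdsWithin 1 {(1:ℂ)}ᶜ,
      Fz t w = Complex.Gamma (t + 1) * w ^ (-(t:ℂ) - 1) := by
    have htend : Tendsto (fun n : ℕ => (1 + (n+1:ℝ)⁻¹ : ℂ)) atTop (nhdsWithin 1 {(1:ℂ)}ᶜ) := by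
      apply tendsto_nhdsWithin_of_tendsto_nhds_of_eventually_within
      · have : Tendsto (fun n : ℕ => ((n:ℝ)+1)⁻¹) atTop (nhds 0) := by
          exact tendsto_one_div_add_atTop_nhds_zero_nat.congr (by intro n; rw [one_div])
        have := (Complex.continuous_ofReal.tendsto 0).comp this
        simpa using (tendsto_const_nhds (x := (1:ℂ))).add this
      · filter_upwards with n
        simp only [Set.mem_compl_iff, Set.mem_singleton_iff]
        intro h
        rw [add_eq_left] at h
        have h2 : ((n:ℝ)+1)⁻¹ = 0 := by exact_mod_cast h
        have h3 : (0:ℝ) < ((n:ℝ)+1)⁻¹ := by positivity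
        simp [h2] at h3
    apply htend.frequently
    apply Filter.Frequently.of_forall
    intro n
    have hr : (0:ℝ) < 1 + (n+1:ℝ)⁻¹ := by positivity
    have := Fz_eq_real t ht hr
    convert this using 2 <;> push_cast <;> ring
  exact hF.eqOn_of_preconnected_of_frequently_eq hG hconn h1 hfreq hz

noncomputable def fgam (t : ℝ) : ℝ → ℂ :=
  fun x => if 0 < x then (x:ℂ) ^ (t:ℂ) * Complex.exp (-x) else 0

lemma fgam_eq_indicator (t : ℝ) :
    fgam t = Set.indicator (Ioi 0) (fun x : ℝ => (x:ℂ) ^ (t:ℂ) * Complex.exp (-(x:ℂ))) := by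
  ext x
  simp [fgam, Set.indicator_apply]

lemma fgam_integrable (t : ℝ) (ht : 0 < t) : Integrable (fgam t) := by
  rw [fgam_eq_indicator, integrable_indicator_iff measurableSet_Ioi]
  have := Fz_integrand_integrable t ht (z := 1) (by simp)
  simpa using this

lemma fourier_fgam (t : ℝ) (ht : 0 < t) (ξ : ℝ) :
    𝓕 (fgam t) ξ = Complex.Gamma (t + 1) * (1 + 2 * Real.pi * ξ * Complex.I) ^ (-(t:ℂ) - 1) := by
  rw [Real.fourier_eq']
  have hre : (0:ℝ) < (1 + 2 * Real.pi * ξ * Complex.I).re := by simp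
  rw [← Fz_eq t ht hre]
  unfold Fz
  rw [fgam_eq_indicator]
  rw [← integral_indicator measurableSet_Ioi]
  congr 1
  ext x
  by_cases hx : x ∈ Ioi 0
  · simp only [Set.indicator_of_mem hx, smul_eq_mul, RCLike.inner_apply, conj_trivial]
    rw [mul_comm, mul_assoc, ← Complex.exp_add]
    congr 2
    push_cast
    ring
  · simp [Set.indicator_of_notMem hx]

lemma fourier_fgam_integrable (t : ℝ) (ht : 0 < t) : Integrable (𝓕 (fgam t)) := by
  have heq : 𝓕 (fgam t)
      = fun ξ : ℝ => Complex.Gamma (t + 1) * (1 + 2 * Real.pi * ξ * Complex.I) ^ (-(t:ℂ) - 1) :=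
    funext (fourier_fgam t ht)
  rw [heq]
  have hcont : Continuous fun ξ : ℝ =>
      Complex.Gamma (t + 1) * (1 + 2 * Real.pi * ξ * Complex.I) ^ (-(t:ℂ) - 1) := by
    apply Continuous.mul continuous_const
    apply continuous_iff_continuousAt.mpr
    intro ξ
    have h1 : Continuous fun ξ : ℝ => (1 + 2 * Real.pi * ξ * Complex.I : ℂ) := by fun_prop
    exact (continuousAt_cpow_const (Or.inl (by simp))).comp h1.continuousAt
  have hintegrable : Integrable fun ξ : ℝ =>
      Real.Gamma (t + 1) * 2 ^ (t + 1) * (1 + ‖ξ‖) ^ (-(t + 1)) := by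
    exact ((integrable_one_add_norm (E := ℝ) (by simp; linarith)).const_mul _)
  apply hintegrable.mono' hcont.aestronglyMeasurable
  filter_upwards with ξ
  set w : ℂ := 1 + 2 * Real.pi * ξ * Complex.I with hw
  have hwne : w ≠ 0 := by
    intro h
    have : w.re = 0 := by rw [h]; simp
    simp [hw] at this
  have habs : (1 + ‖ξ‖) / 2 ≤ ‖w‖ := by
    have h1 : (1:ℝ) ≤ ‖w‖ := by
      have := Complex.abs_re_le_norm w
      simp only [hw] at this ⊢
      simp at this
      simpa using this
    have h2 : |ξ| ≤ ‖w‖ := by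
      have := Complex.abs_im_le_norm w
      simp only [hw] at this
      simp at this
      calc |ξ| ≤ 2 * Real.pi * |ξ| := by
            nlinarith [Real.pi_gt_three, abs_nonneg ξ]
        _ = |2 * Real.pi * ξ| := by
            rw [abs_mul, abs_of_pos (by positivity : (0:ℝ) < 2 * Real.pi)]
        _ ≤ ‖w‖ := by rw [hw]; simpa [abs_mul] using this
    rw [Real.norm_eq_abs]
    linarith
  have hnorm : ‖Complex.Gamma (↑t + 1) * w ^ (-(t:ℂ) - 1)‖
      = Real.Gamma (t + 1) * ‖w‖ ^ (-(t + 1)) := by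
    rw [norm_mul]
    congr 1
    · rw [show ((t:ℂ) + 1) = ((t + 1 : ℝ) : ℂ) by push_cast; ring, Complex.Gamma_ofReal,
        Complex.norm_real, Real.norm_eq_abs, abs_of_pos (Real.Gamma_pos_of_pos (by linarith))]
    · rw [Complex.norm_cpow_of_ne_zero hwne]
      simp
      ring_nf
  rw [hnorm]
  rw [mul_assoc]
  apply mul_le_mul_of_nonneg_left _ (Real.Gamma_pos_of_pos (by linarith)).le
  have hhalf : (0:ℝ) < (1 + ‖ξ‖) / 2 := by positivity
  calc ‖w‖ ^ (-(t + 1)) ≤ ((1 + ‖ξ‖) / 2) ^ (-(t + 1)) :=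
        Real.rpow_le_rpow_of_nonpos hhalf habs (by linarith)
    _ = 2 ^ (t + 1) * (1 + ‖ξ‖) ^ (-(t + 1)) := by
        rw [Real.div_rpow (by positivity) (by norm_num), Real.rpow_neg (by norm_num : (0:ℝ) ≤ 2)]
        field_simp

/-- `∫_{-∞}^{+∞} e^{1-iy}/(1-iy)^{t+1} dy = 2π/Γ(t+1)`. -/
theorem stmt5 (t : ℝ) (ht : 0 < t) :
    ∫ y : ℝ, Complex.exp (1 - y * Complex.I) / (1 - y * Complex.I) ^ ((t : ℂ) + 1)
      = ((2 * Real.pi / Real.Gamma (t + 1) : ℝ) : ℂ) := by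
  have hΓC : Complex.Gamma ((t:ℂ) + 1) = (Real.Gamma (t + 1) : ℂ) := by
    rw [show ((t:ℂ) + 1) = ((t + 1 : ℝ) : ℂ) by push_cast; ring, Complex.Gamma_ofReal]
  have hΓpos : 0 < Real.Gamma (t + 1) := Real.Gamma_pos_of_pos (by linarith)
  have hΓne : Complex.Gamma ((t:ℂ) + 1) ≠ 0 := by
    rw [hΓC]
    exact_mod_cast hΓpos.ne'
  have hcont : ContinuousAt (fgam t) 1 := by
    have hev : fgam t =ᶠ[nhds (1:ℝ)] fun x => (x:ℂ) ^ (t:ℂ) * Complex.exp (-x) := by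
      filter_upwards [Ioi_mem_nhds (by norm_num : (0:ℝ) < 1)] with x hx
      simp [fgam, mem_Ioi.mp hx]
    have hc : ContinuousAt (fun x : ℝ => (x:ℂ) ^ (t:ℂ) * Complex.exp (-x)) 1 := by
      apply ContinuousAt.mul
      · exact continuousAt_ofReal_cpow_const 1 _ (Or.inr one_ne_zero)
      · fun_prop
    exact hc.congr hev.symm
  have hinv := (fgam_integrable t ht).fourierInv_fourier_eq (fourier_fgam_integrable t ht) hcont
  have hf1 : fgam t 1 = Complex.exp (-1) := by simp [fgam]
  have hL : 𝓕⁻ (𝓕 (fgam t)) 1 = Complex.Gamma ((t:ℂ) + 1) *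
      ∫ ξ : ℝ, Complex.exp ((2 * Real.pi * ξ : ℝ) * Complex.I)
        * (1 + 2 * Real.pi * ξ * Complex.I) ^ (-(t:ℂ) - 1) := by
    rw [Real.fourierInv_eq', ← MeasureTheory.integral_const_mul]
    congr 1
    ext ξ
    rw [fourier_fgam t ht ξ]
    simp only [smul_eq_mul, RCLike.inner_apply, conj_trivial, mul_one]
    ring
  have hkey : ∫ ξ : ℝ, Complex.exp ((2 * Real.pi * ξ : ℝ) * Complex.I)
        * (1 + 2 * Real.pi * ξ * Complex.I) ^ (-(t:ℂ) - 1)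
      = Complex.exp (-1) / Complex.Gamma ((t:ℂ) + 1) := by
    rw [eq_div_iff hΓne, mul_comm, ← hL, hinv, hf1]
  have hcv := MeasureTheory.Measure.integral_comp_mul_left
    (fun y : ℝ => Complex.exp (1 - y * Complex.I) / (1 - y * Complex.I) ^ ((t : ℂ) + 1))
    (-(2 * Real.pi))
  have hpt : ∀ ξ : ℝ, Complex.exp (1 - (-(2 * Real.pi) * ξ : ℝ) * Complex.I)
        / (1 - (-(2 * Real.pi) * ξ : ℝ) * Complex.I) ^ ((t : ℂ) + 1)
      = Complex.exp 1 * (Complex.exp ((2 * Real.pi * ξ : ℝ) * Complex.I)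
        * (1 + 2 * Real.pi * ξ * Complex.I) ^ (-(t:ℂ) - 1)) := by
    intro ξ
    have hbase : (1 - ((-(2 * Real.pi) * ξ : ℝ) : ℂ) * Complex.I)
        = 1 + 2 * Real.pi * ξ * Complex.I := by
      push_cast
      ring
    rw [hbase]
    have hexp : Complex.exp (1 + 2 * Real.pi * ξ * Complex.I)
        = Complex.exp 1 * Complex.exp ((2 * Real.pi * ξ : ℝ) * Complex.I) := by
      rw [← Complex.exp_add]
      congr 1
      push_cast
      ring
    have hpow : (1 + 2 * Real.pi * ξ * Complex.I) ^ (-(t:ℂ) - 1)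
        = ((1 + 2 * Real.pi * ξ * Complex.I) ^ ((t:ℂ) + 1))⁻¹ := by
      rw [show (-(t:ℂ) - 1) = -((t:ℂ) + 1) by ring, Complex.cpow_neg]
    rw [hexp, hpow]
    ring
  simp only [hpt] at hcv
  rw [MeasureTheory.integral_const_mul, hkey] at hcv
  have h2π : (0:ℝ) < 2 * Real.pi := by positivity
  rw [abs_inv, abs_neg, abs_of_pos h2π] at hcv
  have hone : Complex.exp 1 * (Complex.exp (-1) / Complex.Gamma ((t:ℂ) + 1))
      = 1 / Complex.Gamma ((t:ℂ) + 1) := by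
    rw [mul_div_assoc'] at *
    congr 1
    rw [← Complex.exp_add]
    simp
  rw [hone] at hcv
  have hT : ∫ y : ℝ, Complex.exp (1 - y * Complex.I) / (1 - y * Complex.I) ^ ((t : ℂ) + 1)
      = (2 * Real.pi : ℝ) • (1 / Complex.Gamma ((t:ℂ) + 1)) := by
    rw [hcv, smul_smul, mul_inv_cancel₀ h2π.ne', one_smul]
  rw [hT, hΓC, Complex.real_smul]
  push_cast
  field_simp
end

section
/- Let P(s) = ∑_{n=2}^N a_n n^{-s} be a Dirichlet polynomial with zero constant term and let t > 0. Then for every θ > 0: P(θ) = (Γ(t+1)/(2π)) ∫_{-∞}^{+∞} I_t P(iτ)/(θ - iτ)^{t+1} dτ, where w^{t+1} = exp((t+1)·Log w) denotes the principal branch of the power on the right half-plane Re w > 0. -/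
open MeasureTheory Complex Set

noncomputable section

namespace Stmt7Aux

lemma rint {p c : ℝ} (hp : 0 < p) (hc : 0 < c) :
    IntegrableOn (fun x : ℝ => x ^ p * Real.exp (-(c * x))) (Ioi 0) := by
  have h0 : IntegrableOn (fun x : ℝ => Real.exp (-x) * x ^ p) (Ioi 0) := by
    simpa using Real.GammaIntegral_convergent (by linarith : (0:ℝ) < p + 1)
  have h1 : IntegrableOn (fun x : ℝ => Real.exp (-(c * x)) * (c * x) ^ p) (Ioi 0) := by
    have := (integrableOn_Ioi_comp_mul_left_iff
      (fun x : ℝ => Real.exp (-x) * x ^ p) 0 hc).2 (by simpa using h0)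
    simpa using this
  have h2 := h1.const_mul (c ^ (-p))
  refine IntegrableOn.congr_fun h2 (fun x hx => ?_) measurableSet_Ioi
  have hx0 : (0:ℝ) < x := hx
  have hmul : (c * x) ^ p = c ^ p * x ^ p := Real.mul_rpow hc.le hx0.le
  have hcp : c ^ (-p) * c ^ p = 1 := by
    rw [← Real.rpow_add hc]; simp
  rw [hmul, show c ^ (-p) * (Real.exp (-(c * x)) * (c ^ p * x ^ p))
      = (c ^ (-p) * c ^ p) * (x ^ p * Real.exp (-(c * x))) from by ring, hcp, one_mul]

lemma norm_aux {x q : ℝ} (hx : 0 < x) (z : ℂ) :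
    ‖((x ^ q : ℝ) : ℂ) * Complex.exp (-(z * x))‖ = x ^ q * Real.exp (-(z.re * x)) := by
  rw [norm_mul, Complex.norm_real, Real.norm_eq_abs,
    _root_.abs_of_nonneg (Real.rpow_nonneg hx.le q), Complex.norm_exp]
  congr 2
  simp [Complex.mul_re]

lemma meas_aux (p : ℝ) (w : ℂ) :
    AEStronglyMeasurable (fun x : ℝ => ((x ^ p : ℝ) : ℂ) * Complex.exp (-(w * x)))
      (volume.restrict (Ioi 0)) := by
  apply ContinuousOn.aestronglyMeasurable ?_ measurableSet_Ioi
  apply ContinuousOn.mul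
  · exact Complex.continuous_ofReal.comp_continuousOn
      (fun x hx => (Real.continuousAt_rpow_const x p (Or.inl (ne_of_gt hx))).continuousWithinAt)
  · exact (Complex.continuous_exp.comp (by fun_prop)).continuousOn

lemma cint {p : ℝ} (hp : 0 < p) {w : ℂ} (hw : 0 < w.re) :
    IntegrableOn (fun x : ℝ => ((x ^ p : ℝ) : ℂ) * Complex.exp (-(w * x))) (Ioi 0) := by
  refine Integrable.mono' (rint hp hw) (meas_aux p w) ?_
  filter_upwards [ae_restrict_mem measurableSet_Ioi] with x hx
  rw [norm_aux hx w]


/-- The function `G`. -/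
def G (p : ℝ) (z : ℂ) : ℂ := ∫ x in Ioi (0:ℝ), ((x ^ p : ℝ) : ℂ) * Complex.exp (-(z * x))

lemma hibp {p : ℝ} (hp : 0 < p) {z : ℂ} (hz : 0 < z.re) :
    z * G (p+1) z = ((p:ℂ) + 1) * G p z := by
  set Phi : ℝ → ℂ := fun x => ((x ^ (p+1) : ℝ) : ℂ) * Complex.exp (-(z * x)) with hPhi
  set Phi' : ℝ → ℂ := fun x => (((p+1) * x ^ p : ℝ) : ℂ) * Complex.exp (-(z * x))
      + ((x ^ (p+1) : ℝ) : ℂ) * (Complex.exp (-(z * x)) * (-z)) with hPhi'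
  have hd : ∀ x ∈ Ioi (0:ℝ), HasDerivAt Phi (Phi' x) x := by
    intro x hx
    have h1 : HasDerivAt (fun y : ℝ => y ^ (p+1)) ((p+1) * x ^ p) x := by
      have := Real.hasDerivAt_rpow_const (x := x) (p := p+1) (Or.inl (ne_of_gt hx))
      simpa using this
    have h2 : HasDerivAt (fun y : ℝ => Complex.exp (-(z * y))) (Complex.exp (-(z * x)) * (-z)) x := by
      have hlin : HasDerivAt (fun y : ℝ => -(z * (y:ℂ))) (-z) x := by
        simpa [Pi.neg_def] using ((Complex.ofRealCLM.hasDerivAt (x := x)).const_mul z).neg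
      simpa [mul_comm] using hlin.cexp
    simpa [hPhi, hPhi', Pi.mul_def] using (h1.ofReal_comp.mul h2)
  have hint1 : IntegrableOn (fun x : ℝ => (((p+1) * x ^ p : ℝ) : ℂ) * Complex.exp (-(z * x))) (Ioi 0) := by
    have h := (cint hp hz).const_mul (((p+1) : ℝ) : ℂ)
    refine IntegrableOn.congr_fun h (fun x hx => ?_) measurableSet_Ioi
    push_cast
    ring
  have hint2 : IntegrableOn (fun x : ℝ => ((x ^ (p+1) : ℝ) : ℂ) * (Complex.exp (-(z * x)) * (-z))) (Ioi 0) := by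
    have h := (cint (by linarith : (0:ℝ) < p + 1) hz).mul_const (-z)
    refine IntegrableOn.congr_fun h (fun x hx => ?_) measurableSet_Ioi
    ring
  have hint : IntegrableOn Phi' (Ioi 0) := hint1.add hint2
  have hcont : ContinuousWithinAt Phi (Ici (0:ℝ)) 0 := by
    apply ContinuousWithinAt.mul
    · exact (Complex.continuous_ofReal.continuousAt.comp_continuousWithinAt
        ((Real.continuousAt_rpow_const 0 (p+1) (Or.inr (by linarith))).continuousWithinAt))
    · exact (Complex.continuous_exp.comp (by fun_prop)).continuousWithinAt
  have htop : Filter.Tendsto Phi Filter.atTop (nhds 0) := by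
    rw [tendsto_zero_iff_norm_tendsto_zero]
    have key := tendsto_rpow_mul_exp_neg_mul_atTop_nhds_zero (p+1) z.re hz
    apply key.congr'
    filter_upwards [Filter.eventually_gt_atTop (0:ℝ)] with x hx
    rw [norm_aux hx z]
    ring_nf
  have h0 := integral_Ioi_of_hasDerivAt_of_tendsto hcont hd hint htop
  have hPhi0 : Phi 0 = 0 := by
    simp [hPhi, Real.zero_rpow (by linarith : p + 1 ≠ 0)]
  rw [hPhi0, sub_zero] at h0
  have hsplit : ∫ x in Ioi (0:ℝ), Phi' x
      = (((p+1) : ℝ) : ℂ) * G p z + (G (p+1) z) * (-z) := by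
    rw [show (fun x => Phi' x) = Phi' from rfl, hPhi']
    rw [integral_add hint1 hint2]
    congr 1
    · rw [G, ← integral_const_mul]
      apply setIntegral_congr_fun measurableSet_Ioi
      intro x hx
      push_cast
      ring
    · rw [G, ← integral_mul_const]
      apply setIntegral_congr_fun measurableSet_Ioi
      intro x hx
      ring
  rw [hsplit] at h0
  push_cast at h0 ⊢
  linear_combination -h0


lemma hG_deriv {p : ℝ} (hp : 0 < p) {z : ℂ} (hz : 0 < z.re) :
    HasDerivAt (G p) (-(G (p+1) z)) z := by
  set eps : ℝ := z.re / 2 with heps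
  have heps0 : 0 < eps := by positivity
  have main := hasDerivAt_integral_of_dominated_loc_of_deriv_le
    (μ := volume.restrict (Ioi (0:ℝ)))
    (F := fun (u : ℂ) (x : ℝ) => ((x ^ p : ℝ) : ℂ) * Complex.exp (-(u * x)))
    (F' := fun (u : ℂ) (x : ℝ) => ((x ^ p : ℝ) : ℂ) * (Complex.exp (-(u * x)) * (-(x:ℂ))))
    (x₀ := z) (s := Metric.ball z eps)
    (bound := fun x => x ^ (p+1) * Real.exp (-(eps * x)))
    (Metric.ball_mem_nhds z heps0)
    (Filter.Eventually.of_forall (fun u => meas_aux p u))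
    (cint hp hz)
    ?_ ?_ (rint (by linarith) heps0) ?_
  · have h2 := main.2
    have : (∫ x in Ioi (0:ℝ), ((x ^ p : ℝ) : ℂ) * (Complex.exp (-(z * x)) * (-(x:ℂ))))
        = -(G (p+1) z) := by
      rw [G, ← integral_neg]
      apply setIntegral_congr_fun measurableSet_Ioi
      intro x hx
      have hx0 : (0:ℝ) < x := hx
      dsimp only
      have hxp : (x:ℝ) ^ (p+1) = x ^ p * x := by
        rw [Real.rpow_add hx0, Real.rpow_one]
      rw [hxp]
      push_cast
      ring
    rwa [this] at h2
  · -- measurability of F' z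
    have hcont2 : Continuous fun x : ℝ => -((x:ℝ):ℂ) := by fun_prop
    have := (meas_aux p z).mul (hcont2.aestronglyMeasurable (μ := volume.restrict (Ioi 0)))
    refine this.congr (Filter.Eventually.of_forall (fun x => ?_))
    simp only [Pi.mul_apply]
    ring
  · -- bound
    apply (ae_restrict_mem measurableSet_Ioi).mono
    intro x hx u hu
    have hx0 : (0:ℝ) < x := hx
    have hure : eps ≤ u.re := by
      have h1 : |(u - z).re| ≤ ‖u - z‖ := Complex.abs_re_le_norm _
      rw [Complex.sub_re] at h1
      rw [Metric.mem_ball, Complex.dist_eq] at hu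
      have := abs_le.1 (h1.trans hu.le)
      have h2 := this.1
      simp only [heps] at *
      linarith
    rw [norm_mul, Complex.norm_real, Real.norm_eq_abs,
      _root_.abs_of_nonneg (Real.rpow_nonneg hx0.le p), norm_mul,
      Complex.norm_exp, norm_neg, Complex.norm_real, Real.norm_eq_abs,
      _root_.abs_of_nonneg hx0.le]
    have hre : (-(u * (x:ℂ))).re = -(u.re * x) := by simp [Complex.mul_re]
    rw [hre]
    have hxp : x ^ (p+1) = x ^ p * x := by rw [Real.rpow_add hx0, Real.rpow_one]
    rw [hxp]
    have hexp : Real.exp (-(u.re * x)) ≤ Real.exp (-(eps * x)) := by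
      apply Real.exp_le_exp.2
      nlinarith
    nlinarith [Real.rpow_nonneg hx0.le p, Real.exp_pos (-(u.re * x)), Real.exp_pos (-(eps * x)),
      mul_le_mul_of_nonneg_left hexp (le_of_lt (mul_pos (Real.rpow_pos_of_pos hx0 p) hx0))]
  · -- differentiability
    apply Filter.Eventually.of_forall
    intro x u hu
    have hlin : HasDerivAt (fun u : ℂ => -(u * (x:ℂ))) (-(x:ℂ)) u := by
      simpa [Pi.neg_def] using ((hasDerivAt_id u).mul_const (x:ℂ)).neg
    exact (hlin.cexp).const_mul _


lemma gamma_cpx {p : ℝ} (hp : 0 < p) {w : ℂ} (hw : 0 < w.re) :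
    ∫ x in Ioi (0:ℝ), ((x ^ p : ℝ) : ℂ) * Complex.exp (-(w * x))
      = ((Real.Gamma (p + 1) : ℝ) : ℂ) / w ^ ((p : ℂ) + 1) := by
  set U : Set ℂ := {z : ℂ | 0 < z.re} with hU
  have hUopen : IsOpen U := isOpen_lt continuous_const Complex.continuous_re
  have hUconvex : Convex ℝ U := convex_halfSpace_re_gt 0
  set H : ℂ → ℂ := fun z => z ^ ((p:ℂ) + 1) * G p z with hH
  have hHd : ∀ z ∈ U, HasDerivAt H 0 z := by
    intro z hz
    have hz0 : (0:ℝ) < z.re := hz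
    have hzne : z ≠ 0 := by
      intro h; rw [h] at hz0; simp at hz0
    have hpow : HasDerivAt (fun z : ℂ => z ^ ((p:ℂ)+1)) (((p:ℂ)+1) * z ^ (p:ℂ)) z := by
      have hslit : z ∈ Complex.slitPlane := Complex.mem_slitPlane_iff.2 (Or.inl hz0)
      have := (hasDerivAt_id z).cpow_const (c := (p:ℂ)+1) hslit
      simpa using this
    have hmul := hpow.mul (hG_deriv hp hz0)
    have hsplit : z ^ ((p:ℂ)+1) = z ^ (p:ℂ) * z := by
      rw [Complex.cpow_add _ _ hzne, Complex.cpow_one]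
    have hib := hibp hp hz0
    refine hmul.congr_deriv ?_
    rw [hsplit]
    linear_combination -(z ^ (p:ℂ)) * hib
  have hdiff : DifferentiableOn ℂ H U := fun z hz =>
    ((hHd z hz).differentiableAt).differentiableWithinAt
  have hfd : ∀ z ∈ U, fderivWithin ℂ H U z = 0 := by
    intro z hz
    rw [fderivWithin_of_isOpen hUopen hz]
    have h2 := (hHd z hz).hasFDerivAt.fderiv
    rw [h2]
    ext
    simp
  have h1U : (1:ℂ) ∈ U := by simp [hU]
  have hwU : w ∈ U := hw
  have hconst := hUconvex.is_const_of_fderivWithin_eq_zero hdiff hfd hwU h1U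
  have hG1 : G p 1 = ((Real.Gamma (p+1) : ℝ) : ℂ) := by
    have hint := Complex.integral_cpow_mul_exp_neg_mul_Ioi
      (a := (p:ℂ)+1) (r := 1) (by simp [hp.le]; linarith) one_pos
    rw [G]
    have heq : ∀ x ∈ Ioi (0:ℝ), ((x ^ p : ℝ) : ℂ) * Complex.exp (-(1 * (x:ℂ)))
        = (x:ℂ) ^ ((p:ℂ) + 1 - 1) * Complex.exp (-((1:ℝ) * x)) := by
      intro x hx
      have hx0 : (0:ℝ) < x := hx
      rw [Complex.ofReal_cpow hx0.le]
      norm_num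
    rw [setIntegral_congr_fun measurableSet_Ioi heq, hint]
    have : Complex.Gamma ((p:ℂ) + 1) = ((Real.Gamma (p+1) : ℝ) : ℂ) := by
      rw [show ((p:ℂ) + 1) = ((p + 1 : ℝ) : ℂ) by push_cast; ring, Complex.Gamma_ofReal]
    rw [this]
    norm_num
  have hHw : H w = ((Real.Gamma (p+1) : ℝ) : ℂ) := by
    rw [hconst]
    simp [hH, hG1]
  have hwne : w ≠ 0 := by
    intro h; rw [h] at hw; simp at hw
  have hne : w ^ ((p:ℂ)+1) ≠ 0 := by
    rw [Complex.cpow_def_of_ne_zero hwne]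
    exact Complex.exp_ne_zero _
  have : G p w = ((Real.Gamma (p+1) : ℝ) : ℂ) / w ^ ((p:ℂ)+1) := by
    rw [eq_div_iff hne]
    rw [← hHw, hH]
    ring
  exact this


lemma normD {θ : ℝ} (hθ : 0 < θ) {p : ℝ} (hp : 0 < p) {z : ℂ} (hre : z.re = θ) :
    ‖(z ^ ((p:ℂ)+1))⁻¹‖ ≤ (min θ 1 / 2) ^ (-(p+1)) * (1 + |z.im|) ^ (-(p+1)) := by
  set c := min θ 1 with hc
  have hc0 : 0 < c := lt_min hθ one_pos
  have hz0 : z ≠ 0 := by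
    intro h
    rw [h] at hre
    simp at hre
    exact hθ.ne hre
  have h2 : θ ≤ ‖z‖ := by
    calc θ = z.re := hre.symm
    _ ≤ |z.re| := le_abs_self _
    _ ≤ ‖z‖ := Complex.abs_re_le_norm z
  have h3 : |z.im| ≤ ‖z‖ := Complex.abs_im_le_norm z
  have h1 : c / 2 * (1 + |z.im|) ≤ ‖z‖ := by
    have hc1 : c ≤ 1 := min_le_right _ _
    have hcθ : c ≤ θ := min_le_left _ _
    nlinarith [abs_nonneg z.im]
  have habs : ‖(z ^ ((p:ℂ)+1))⁻¹‖ = (‖z‖) ^ (-(p+1)) := by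
    rw [norm_inv, Complex.norm_cpow_of_ne_zero hz0]
    simp only [Complex.add_re, Complex.ofReal_re, Complex.one_re, Complex.add_im,
      Complex.ofReal_im, Complex.one_im, add_zero, mul_zero, Real.exp_zero, div_one]
    rw [← Real.rpow_neg (norm_nonneg z)]
  rw [habs, ← Real.mul_rpow (by positivity) (by positivity)]
  rw [Real.rpow_neg (norm_nonneg z), Real.rpow_neg (by positivity)]
  apply inv_anti₀ (Real.rpow_pos_of_pos (by positivity) _)
  exact Real.rpow_le_rpow (by positivity) h1 (by linarith)

lemma Dne {θ : ℝ} (hθ : 0 < θ) (p : ℝ) {z : ℂ} (hre : z.re = θ) :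
    z ^ ((p:ℂ)+1) ≠ 0 := by
  have hz0 : z ≠ 0 := by
    intro h
    rw [h] at hre
    simp at hre
    exact hθ.ne hre
  rw [Complex.cpow_def_of_ne_zero hz0]
  exact Complex.exp_ne_zero _

lemma intD {p θ : ℝ} (hp : 0 < p) (hθ : 0 < θ) :
    Integrable (fun τ : ℝ => (((θ:ℂ) - ↑τ * Complex.I) ^ ((p:ℂ)+1))⁻¹) := by
  have hre : ∀ τ : ℝ, ((θ:ℂ) - ↑τ * Complex.I).re = θ := by
    intro τ; simp
  have hcont : Continuous fun τ : ℝ => (((θ:ℂ) - ↑τ * Complex.I) ^ ((p:ℂ)+1))⁻¹ := by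
    apply Continuous.inv₀
    · apply Continuous.cpow (by fun_prop) continuous_const
      intro τ
      exact Complex.mem_slitPlane_iff.2 (Or.inl (by rw [hre τ]; exact hθ))
    · intro τ
      exact Dne hθ p (hre τ)
  have hmaj : Integrable (fun τ : ℝ =>
      (min θ 1 / 2) ^ (-(p+1)) * (1 + ‖τ‖) ^ (-(p+1))) := by
    apply Integrable.const_mul
    apply integrable_one_add_norm (E := ℝ)
    simp only [Module.finrank_self]
    norm_num
    linarith
  refine hmaj.mono' hcont.aestronglyMeasurable ?_
  apply Filter.Eventually.of_forall
  intro τ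
  have := normD hθ hp (hre τ)
  convert this using 3
  all_goals simp [Real.norm_eq_abs]


open FourierTransform RealInnerProductSpace in
lemma key {p θ L : ℝ} (hp : 0 < p) (hθ : 0 < θ) (hL : 0 < L) :
    ((Real.Gamma (p+1) / (2 * Real.pi) : ℝ) : ℂ) *
      (∫ τ : ℝ, Complex.exp (-(↑L * ↑τ) * Complex.I) / ((θ:ℂ) - ↑τ * Complex.I) ^ ((p:ℂ)+1))
    = ((L ^ p * Real.exp (-(θ * L)) : ℝ) : ℂ) := by
  have hθre : (0:ℝ) < ((θ:ℂ)).re := by simpa using hθ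
  set q : ℂ := (p:ℂ) + 1 with hq
  set Γc : ℂ := ((Real.Gamma (p+1) : ℝ) : ℂ) with hΓc
  set f : ℝ → ℂ :=
    Set.indicator (Ioi 0) (fun x : ℝ => ((x ^ p * Real.exp (-(θ * x)) : ℝ) : ℂ)) with hf
  have hcast : ∀ x : ℝ, ((x ^ p * Real.exp (-(θ * x)) : ℝ) : ℂ)
      = ((x ^ p : ℝ) : ℂ) * Complex.exp (-((θ:ℂ) * x)) := by
    intro x
    push_cast [Complex.ofReal_exp]
    ring_nf
  have hfint : Integrable f := by
    rw [hf, integrable_indicator_iff measurableSet_Ioi]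
    refine IntegrableOn.congr_fun (cint hp hθre) (fun x hx => (hcast x).symm) measurableSet_Ioi
  -- Fourier transform of f
  have hFT : ∀ ξ : ℝ, 𝓕 f ξ = Γc / ((θ:ℂ) + (2 * Real.pi * ξ) * Complex.I) ^ q := by
    intro ξ
    rw [Real.fourier_eq']
    have h1 : ∀ v : ℝ,
        Complex.exp (((-2 * Real.pi * (inner ℝ v ξ : ℝ) : ℝ) : ℂ) * Complex.I) • f v
        = Set.indicator (Ioi 0)
            (fun x : ℝ => ((x ^ p : ℝ) : ℂ)
              * Complex.exp (-(((θ:ℂ) + (2 * Real.pi * ξ) * Complex.I) * x))) v := by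
      intro v
      have hinner : (inner ℝ v ξ : ℝ) = v * ξ := Real.inner_apply v ξ
      by_cases hv : v ∈ Ioi (0:ℝ)
      · rw [hf, Set.indicator_of_mem hv, Set.indicator_of_mem hv, smul_eq_mul, hcast v,
          hinner]
        rw [show Complex.exp (((-2 * Real.pi * (v * ξ) : ℝ) : ℂ) * Complex.I)
              * (((v ^ p : ℝ) : ℂ) * Complex.exp (-((θ:ℂ) * v)))
            = ((v ^ p : ℝ) : ℂ) * (Complex.exp (((-2 * Real.pi * (v * ξ) : ℝ) : ℂ) * Complex.I)
              * Complex.exp (-((θ:ℂ) * v))) from by ring, ← Complex.exp_add]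
        congr 2
        push_cast
        ring
      · rw [hf, Set.indicator_of_notMem hv, Set.indicator_of_notMem hv, smul_zero]
    rw [integral_congr_ae (Filter.Eventually.of_forall h1), integral_indicator measurableSet_Ioi]
    exact gamma_cpx hp (by simpa using hθ)
  -- integrability of the Fourier transform
  have hFTfun : 𝓕 f = fun ξ : ℝ =>
      Γc * ((((θ:ℂ) - ((-(2 * Real.pi) * ξ : ℝ) : ℂ) * Complex.I) ^ q)⁻¹) := by
    funext ξ
    rw [hFT ξ, div_eq_mul_inv]
    congr 3
    push_cast
    ring
  have h2pine : (-(2 * Real.pi) : ℝ) ≠ 0 := by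
    have := Real.pi_pos
    intro h
    nlinarith
  have hFTint : Integrable (𝓕 f) := by
    rw [hFTfun]
    exact ((intD hp hθ).comp_mul_left' h2pine).const_mul Γc
  -- continuity of f at L
  have hcontL : ContinuousAt f L := by
    have hgc : ContinuousAt (fun x : ℝ => ((x ^ p * Real.exp (-(θ * x)) : ℝ) : ℂ)) L := by
      apply Complex.continuous_ofReal.continuousAt.comp
      exact (Real.continuousAt_rpow_const L p (Or.inl hL.ne')).mul
        (Real.continuous_exp.continuousAt.comp (by fun_prop))
    apply hgc.congr
    filter_upwards [isOpen_Ioi.mem_nhds hL] with x hx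
    rw [hf, Set.indicator_of_mem hx]
  -- Fourier inversion
  have hinv := hfint.fourierInv_fourier_eq hFTint hcontL
  rw [Real.fourierInv_eq'] at hinv
  have hfL : f L = ((L ^ p * Real.exp (-(θ * L)) : ℝ) : ℂ) := by
    rw [hf, Set.indicator_of_mem (by exact hL : L ∈ Ioi (0:ℝ))]
  rw [hfL] at hinv
  -- change of variables
  set g : ℝ → ℂ :=
    fun τ => Complex.exp (-(↑L * ↑τ) * Complex.I) / ((θ:ℂ) - ↑τ * Complex.I) ^ q with hg
  have hcomp : ∀ ξ : ℝ,
      Complex.exp (((2 * Real.pi * (inner ℝ ξ L : ℝ) : ℝ) : ℂ) * Complex.I) • 𝓕 f ξ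
      = Γc * g ((-(2 * Real.pi)) * ξ) := by
    intro ξ
    have hinner : (inner ℝ ξ L : ℝ) = ξ * L := Real.inner_apply ξ L
    rw [smul_eq_mul, hFT ξ, hg, hinner]
    dsimp only
    push_cast
    rw [div_eq_mul_inv, div_eq_mul_inv,
      show -((L:ℂ) * (-(2 * (Real.pi:ℂ)) * (ξ:ℂ))) * Complex.I
          = 2 * (Real.pi:ℂ) * ((ξ:ℂ) * (L:ℂ)) * Complex.I from by ring,
      show ((θ:ℂ) - -(2 * (Real.pi:ℂ)) * (ξ:ℂ) * Complex.I)
          = ((θ:ℂ) + 2 * (Real.pi:ℂ) * (ξ:ℂ) * Complex.I) from by ring]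
    ring
  rw [integral_congr_ae (Filter.Eventually.of_forall hcomp)] at hinv
  rw [integral_const_mul] at hinv
  have hCOV := MeasureTheory.Measure.integral_comp_mul_left g (-(2 * Real.pi))
  rw [hCOV] at hinv
  rw [abs_inv, abs_neg, abs_of_pos (by positivity : (0:ℝ) < 2 * Real.pi)] at hinv
  rw [← hinv]
  rw [real_smul]
  push_cast
  ring
end Stmt7Aux

/-- fractional Cauchy-type representation formula for Dirichlet polynomials. -/
theorem stmt7 (N : ℕ) (a : ℕ → ℂ) (ha1 : a 1 = 0) (t : ℝ) (ht : 0 < t)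
    (θ : ℝ) (hθ : 0 < θ) :
    dirEval N a (θ : ℂ) = ((Real.Gamma (t + 1) / (2 * Real.pi) : ℝ) : ℂ) *
      ∫ τ : ℝ,
        dirEval N (Icoef t a) ((τ : ℂ) * Complex.I) /
          ((θ : ℂ) - (τ : ℂ) * Complex.I) ^ ((t : ℂ) + 1) := by

  classical
  -- rewrite the integrand as a finite sum
  have hsum : ∀ τ : ℝ, dirEval N (Icoef t a) ((τ:ℂ) * Complex.I)
        / ((θ:ℂ) - (τ:ℂ) * Complex.I) ^ ((t:ℂ) + 1)
      = ∑ n ∈ Finset.Icc 1 N, Icoef t a n * ((n:ℂ) ^ (-((τ:ℂ) * Complex.I))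
          * ((((θ:ℂ) - (τ:ℂ) * Complex.I) ^ ((t:ℂ) + 1))⁻¹)) := by
    intro τ
    rw [dirEval, Finset.sum_div]
    refine Finset.sum_congr rfl (fun n hn => ?_)
    rw [div_eq_mul_inv, mul_assoc]
  have hre : ∀ τ : ℝ, ((θ:ℂ) - (τ:ℂ) * Complex.I).re = θ := by intro τ; simp
  have hintn : ∀ n ∈ Finset.Icc 1 N, Integrable (fun τ : ℝ =>
      Icoef t a n * ((n:ℂ) ^ (-((τ:ℂ) * Complex.I))
        * ((((θ:ℂ) - (τ:ℂ) * Complex.I) ^ ((t:ℂ) + 1))⁻¹))) := by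
    intro n hn
    have hn1 : 1 ≤ n := (Finset.mem_Icc.1 hn).1
    have hn0 : (0:ℝ) < n := by exact_mod_cast hn1
    have hnorm1 : ∀ τ : ℝ, ‖Icoef t a n * (n:ℂ) ^ (-((τ:ℂ) * Complex.I))‖
        ≤ ‖Icoef t a n‖ := by
      intro τ
      rw [norm_mul]
      have : ‖(n:ℂ) ^ (-((τ:ℂ) * Complex.I))‖ = 1 := by
        rw [show ((n:ℕ):ℂ) = (((n:ℝ)):ℂ) from by push_cast; rfl]
        rw [Complex.norm_cpow_eq_rpow_re_of_pos hn0]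
        simp
      rw [this, mul_one]
    have hmeas : AEStronglyMeasurable
        (fun τ : ℝ => Icoef t a n * (n:ℂ) ^ (-((τ:ℂ) * Complex.I))) volume := by
      apply Continuous.aestronglyMeasurable
      apply continuous_const.mul
      apply Continuous.const_cpow (by fun_prop)
      left
      exact_mod_cast hn0.ne'
    have := (Stmt7Aux.intD ht hθ).bdd_mul hmeas (c := ‖Icoef t a n‖) (Filter.Eventually.of_forall hnorm1)
    refine this.congr (Filter.Eventually.of_forall (fun τ => ?_))
    ring
  calc dirEval N a (θ : ℂ)
      = ∑ n ∈ Finset.Icc 1 N, ((Real.Gamma (t + 1) / (2 * Real.pi) : ℝ) : ℂ) *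
          ∫ τ : ℝ, Icoef t a n * ((n:ℂ) ^ (-((τ:ℂ) * Complex.I))
            * ((((θ:ℂ) - (τ:ℂ) * Complex.I) ^ ((t:ℂ) + 1))⁻¹)) := by
        rw [dirEval]
        refine Finset.sum_congr rfl (fun n hn => ?_)
        have hn1 : 1 ≤ n := (Finset.mem_Icc.1 hn).1
        by_cases h1 : n = 1
        · subst h1
          simp [Icoef, ha1]
        · have h2 : 2 ≤ n := by omega
          have hngt : (1:ℝ) < n := by exact_mod_cast h2
          have hn0 : (0:ℝ) < n := by linarith
          set L : ℝ := Real.log n with hLdef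
          have hL : 0 < L := Real.log_pos hngt
          have hcpow : ∀ s : ℂ, ((n:ℕ):ℂ) ^ (-s) = Complex.exp ((L:ℂ) * (-s)) := by
            intro s
            rw [show ((n:ℕ):ℂ) = (((n:ℝ)):ℂ) from by push_cast; rfl]
            rw [Complex.cpow_def_of_ne_zero (by exact_mod_cast hn0.ne'), hLdef,
              Complex.ofReal_log hn0.le]
          have hkey := Stmt7Aux.key (p := t) (θ := θ) (L := L) ht hθ hL
          have hpull : (∫ τ : ℝ, Icoef t a n * ((n:ℂ) ^ (-((τ:ℂ) * Complex.I))
                * ((((θ:ℂ) - (τ:ℂ) * Complex.I) ^ ((t:ℂ) + 1))⁻¹)))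
              = Icoef t a n * ∫ τ : ℝ, Complex.exp (-((L:ℂ) * (τ:ℂ)) * Complex.I)
                  / ((θ:ℂ) - (τ:ℂ) * Complex.I) ^ ((t:ℂ) + 1) := by
            rw [integral_const_mul]
            congr 1
            apply integral_congr_ae
            apply Filter.Eventually.of_forall
            intro τ
            dsimp only
            rw [hcpow ((τ:ℂ) * Complex.I), div_eq_mul_inv]
            congr 2
            ring
          rw [hpull]
          rw [show ((Real.Gamma (t + 1) / (2 * Real.pi) : ℝ) : ℂ) *
              (Icoef t a n * ∫ τ : ℝ, Complex.exp (-((L:ℂ) * (τ:ℂ)) * Complex.I)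
                / ((θ:ℂ) - (τ:ℂ) * Complex.I) ^ ((t:ℂ) + 1))
            = Icoef t a n * (((Real.Gamma (t + 1) / (2 * Real.pi) : ℝ) : ℂ) *
              ∫ τ : ℝ, Complex.exp (-((L:ℂ) * (τ:ℂ)) * Complex.I)
                / ((θ:ℂ) - (τ:ℂ) * Complex.I) ^ ((t:ℂ) + 1)) from by ring]
          rw [hkey, hcpow (θ:ℂ), Icoef]
          have hrw : (L ^ (-t) : ℝ) * (L ^ t * Real.exp (-(θ * L))) = Real.exp (-(θ * L)) := by
            rw [show (L ^ (-t) : ℝ) * (L ^ t * Real.exp (-(θ * L)))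
              = ((L ^ (-t) : ℝ) * L ^ t) * Real.exp (-(θ * L)) from by ring,
              ← Real.rpow_add hL]
            simp
          have : ((L ^ (-t) : ℝ) : ℂ) * ((L ^ t * Real.exp (-(θ * L)) : ℝ) : ℂ)
              = ((Real.exp (-(θ * L)) : ℝ) : ℂ) := by
            rw [← Complex.ofReal_mul, hrw]
          rw [mul_assoc, this]
          congr 1
          rw [Complex.ofReal_exp]
          congr 1
          push_cast
          ring
    _ = ((Real.Gamma (t + 1) / (2 * Real.pi) : ℝ) : ℂ) *
          ∑ n ∈ Finset.Icc 1 N, ∫ τ : ℝ, Icoef t a n * ((n:ℂ) ^ (-((τ:ℂ) * Complex.I))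
            * ((((θ:ℂ) - (τ:ℂ) * Complex.I) ^ ((t:ℂ) + 1))⁻¹)) := by
        rw [Finset.mul_sum]
    _ = ((Real.Gamma (t + 1) / (2 * Real.pi) : ℝ) : ℂ) *
          ∫ τ : ℝ, dirEval N (Icoef t a) ((τ:ℂ) * Complex.I)
            / ((θ:ℂ) - (τ:ℂ) * Complex.I) ^ ((t:ℂ) + 1) := by
        congr 1
        rw [← integral_finset_sum _ hintn]
        apply integral_congr_ae
        apply Filter.Eventually.of_forall
        intro τ
        exact (hsum τ).symm

end
end
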